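/- arXiv:1810.10370 — 5 statements merged into one kernel-verified Lean document; each statement's English description precedes it below -/
import Mathlib

section
/- Assume (H1), (H2), (H5), let μ > 0 and ε > 0 satisfy εγ₂ < μ < γ₁, and let a : ℝ → ℝⁿ, b : ℝ → ℝᵐ be Borel measurable. Fix v̄₀ ∈ ℝᵐ and for (û,v̂) ∈ C⁻_{μ/ε}(ℝⁿ×ℝᵐ) define I₁(û,v̂)(t) = ∫_{−∞}^t e^{(A/ε)(t−r)} ε^{−1} U(û_r + a(r), v̂_r + b(r)) dr and I₂(û,v̂)(t) = e^{Bt}v̄₀ − ∫_t^0 e^{B(t−r)} V(û_r + a(r), v̂_r + b(r)) dr for t ≤ 0. Then sup_{t≤0} e^{(μ/ε)t}|I₁(û,v̂)(t)| ≤ M_U/γ₁ and sup_{t≤0} e^{(μ/ε)t}|I₂(û,v̂)(t)| ≤ |v̄₀| + M_V/γ₂; in particular the operator I = (I₁, I₂) maps C⁻_{μ/ε}(ℝⁿ×ℝᵐ) into itself. -/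
open scoped RealInnerProductSpace
open MeasureTheory Set

set_option maxHeartbeats 2000000
set_option synthInstance.maxHeartbeats 400000

lemma expIntegrableOn_aux (c t : ℝ) (hc : 0 < c) :
    IntegrableOn (fun r => Real.exp (c * (r - t))) (Iic t) := by
  have h2 : Integrable ((Iic (c * t)).indicator fun r : ℝ => Real.exp r) :=
    (integrable_indicator_iff measurableSet_Iic).2 (integrableOn_exp_Iic (c * t))
  have h3 : Integrable fun r : ℝ => ((Iic (c * t)).indicator (fun r => Real.exp r)) (c * r) :=
    h2.comp_mul_left' hc.ne'
  have h4 : IntegrableOn (fun r : ℝ => Real.exp (c * r)) (Iic t) := by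
    rw [← integrable_indicator_iff measurableSet_Iic]
    refine h3.congr (Filter.Eventually.of_forall fun r => ?_)
    show (Iic (c * t)).indicator (fun r => Real.exp r) (c * r)
        = (Iic t).indicator (fun r : ℝ => Real.exp (c * r)) r
    by_cases hr : r ≤ t
    · rw [indicator_of_mem (mem_Iic.2 ((mul_le_mul_iff_right₀ hc).2 hr)),
        indicator_of_mem (mem_Iic.2 hr)]
    · rw [indicator_of_notMem (fun h => hr ((mul_le_mul_iff_right₀ hc).1 (mem_Iic.1 h))),
        indicator_of_notMem (fun h => hr (mem_Iic.1 h))]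
  refine (h4.mul_const (Real.exp (-(c * t)))).congr (Filter.Eventually.of_forall fun r => ?_)
  show Real.exp (c * r) * Real.exp (-(c * t)) = Real.exp (c * (r - t))
  rw [← Real.exp_add]
  ring_nf

lemma expIntegral_Iic_aux (c t : ℝ) (hc : 0 < c) :
    ∫ r in Iic t, Real.exp (c * (r - t)) = 1 / c := by
  have hd : ∀ x ∈ Iic t,
      HasDerivAt (fun r => c⁻¹ * Real.exp (c * (r - t))) (Real.exp (c * (x - t))) x := by
    intro x _
    have h1 : HasDerivAt (fun r : ℝ => c * (r - t)) c x := by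
      simpa using ((hasDerivAt_id x).sub_const t).const_mul c
    have h2 := h1.exp.const_mul c⁻¹
    have h3 : c⁻¹ * (Real.exp (c * (x - t)) * c) = Real.exp (c * (x - t)) := by
      rw [mul_comm (Real.exp _) c, ← mul_assoc, inv_mul_cancel₀ hc.ne', one_mul]
    exact h2.congr_deriv h3
  have h1 : Filter.Tendsto (fun r : ℝ => c * (r - t)) Filter.atBot Filter.atBot := by
    have h0 : Filter.Tendsto (fun r : ℝ => r + -t) Filter.atBot Filter.atBot :=
      Filter.tendsto_atBot_add_const_right _ (-t) Filter.tendsto_id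
    have := h0.const_mul_atBot hc
    simpa [sub_eq_add_neg] using this
  have htend : Filter.Tendsto (fun r => c⁻¹ * Real.exp (c * (r - t))) Filter.atBot (nhds 0) := by
    have := (Real.tendsto_exp_atBot.comp h1).const_mul c⁻¹
    simpa using this
  have := integral_Iic_of_hasDerivAt_of_tendsto' hd (expIntegrableOn_aux c t hc) htend
  simpa [Real.exp_zero] using this

lemma exp_smul_decay {E : Type*} [NormedAddCommGroup E] [InnerProductSpace ℝ E]
    [CompleteSpace E] {γ : ℝ} (A : E →L[ℝ] E)
    (hA : ∀ x, ⟪A x, x⟫ ≤ -γ * ‖x‖ ^ 2) {s : ℝ} (hs : 0 ≤ s) :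
    ‖NormedSpace.exp (s • A)‖ ≤ Real.exp (-γ * s) := by
  refine ContinuousLinearMap.opNorm_le_bound _ (Real.exp_pos _).le fun x => ?_
  set y : ℝ → E := fun u => NormedSpace.exp (u • A) x with hy
  have hyd : ∀ u : ℝ, HasDerivAt y (A (y u)) u := by
    intro u
    have h1 := hasDerivAt_exp_smul_const' (𝕂 := ℝ) A u
    have h2 := h1.clm_apply (hasDerivAt_const u x)
    simpa [ContinuousLinearMap.mul_apply] using h2
  set g : ℝ → ℝ := fun u => Real.exp (2 * γ * u) * ⟪y u, y u⟫ with hg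
  have hgd : ∀ u : ℝ, HasDerivAt g
      (Real.exp (2 * γ * u) * (2 * γ) * ⟪y u, y u⟫
        + Real.exp (2 * γ * u) * (⟪y u, A (y u)⟫ + ⟪A (y u), y u⟫)) u := by
    intro u
    have h1 : HasDerivAt (fun u : ℝ => 2 * γ * u) (2 * γ) u := by
      simpa using (hasDerivAt_id u).const_mul (2 * γ)
    have he := h1.exp
    have hi := (hyd u).inner ℝ (hyd u)
    exact he.mul hi
  have hle : ∀ u, deriv g u ≤ 0 := by
    intro u
    rw [(hgd u).deriv]
    have h1 : ⟪A (y u), y u⟫ ≤ -γ * ‖y u‖ ^ 2 := hA (y u)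
    have h2 : ⟪y u, A (y u)⟫ = ⟪A (y u), y u⟫ := real_inner_comm _ _
    have h3 : ⟪y u, y u⟫ = ‖y u‖ ^ 2 := real_inner_self_eq_norm_sq _
    have h4 : (0:ℝ) < Real.exp (2 * γ * u) := Real.exp_pos _
    rw [h2, h3]
    nlinarith
  have hmono : Antitone g :=
    antitone_of_deriv_nonpos (fun u => (hgd u).differentiableAt) hle
  have h0 : g s ≤ g 0 := hmono hs
  have hg0 : g 0 = ‖x‖ ^ 2 := by
    simp [hg, hy, NormedSpace.exp_zero, real_inner_self_eq_norm_sq]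
  have hgs : g s = Real.exp (2 * γ * s) * ‖y s‖ ^ 2 := by
    simp [hg, real_inner_self_eq_norm_sq]
  rw [hgs, hg0] at h0
  have key : ‖y s‖ ^ 2 ≤ (Real.exp (-γ * s) * ‖x‖) ^ 2 := by
    have hp : Real.exp (2 * γ * s) = Real.exp (γ * s) ^ 2 := by
      rw [sq, ← Real.exp_add]; congr 1; ring
    have hq : Real.exp (-γ * s) = (Real.exp (γ * s))⁻¹ := by
      rw [neg_mul, Real.exp_neg]
    have hpos : (0:ℝ) < Real.exp (γ * s) := Real.exp_pos _
    rw [mul_pow, hq, inv_pow, inv_mul_eq_div, le_div_iff₀ (by positivity)]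
    rw [hp] at h0
    nlinarith
  have := Real.sqrt_le_sqrt key
  rwa [Real.sqrt_sq (norm_nonneg _), Real.sqrt_sq (by positivity)] at this

lemma expIntegral_interval_aux (c t : ℝ) (hc : 0 < c) :
    ∫ r in t..0, Real.exp (c * (r - t)) = c⁻¹ * (Real.exp (-(c * t)) - 1) := by
  have hd : ∀ x ∈ uIcc t 0,
      HasDerivAt (fun r => c⁻¹ * Real.exp (c * (r - t))) (Real.exp (c * (x - t))) x := by
    intro x _
    have h1 : HasDerivAt (fun r : ℝ => c * (r - t)) c x := by
      simpa using ((hasDerivAt_id x).sub_const t).const_mul c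
    have h2 := h1.exp.const_mul c⁻¹
    have h3 : c⁻¹ * (Real.exp (c * (x - t)) * c) = Real.exp (c * (x - t)) := by
      rw [mul_comm (Real.exp _) c, ← mul_assoc, inv_mul_cancel₀ hc.ne', one_mul]
    exact h2.congr_deriv h3
  have hint : IntervalIntegrable (fun r => Real.exp (c * (r - t))) volume t 0 :=
    (Real.continuous_exp.comp (by fun_prop)).intervalIntegrable t 0
  have := intervalIntegral.integral_eq_sub_of_hasDerivAt hd hint
  rw [this]
  rw [show c * ((0:ℝ) - t) = -(c * t) by ring, show c * (t - t) = 0 by ring, Real.exp_zero]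
  ring

/-- Under (H1), (H2), (H5), with `ε γ₂ < μ < γ₁`, the operator
`I = (I₁, I₂)` defined by the integral system (★) satisfies
`sup_{t ≤ 0} e^{(μ/ε) t} ‖I₁(û,v̂)(t)‖ ≤ M_U / γ₁` and
`sup_{t ≤ 0} e^{(μ/ε) t} ‖I₂(û,v̂)(t)‖ ≤ ‖v̄₀‖ + M_V / γ₂`;
in particular it maps `C⁻_{μ/ε}(ℝⁿ × ℝᵐ)` into itself. -/
theorem star_operator_maps_into_weighted_space (n m : ℕ)
    (γ₁ γ₂ γ₃ L MU MV μ ε : ℝ)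
    (A : EuclideanSpace ℝ (Fin n) →L[ℝ] EuclideanSpace ℝ (Fin n))
    (B : EuclideanSpace ℝ (Fin m) →L[ℝ] EuclideanSpace ℝ (Fin m))
    (U : EuclideanSpace ℝ (Fin n) × EuclideanSpace ℝ (Fin m) → EuclideanSpace ℝ (Fin n))
    (V : EuclideanSpace ℝ (Fin n) × EuclideanSpace ℝ (Fin m) → EuclideanSpace ℝ (Fin m))
    -- (H1)
    (hγ₁ : 0 < γ₁)
    (hA : ∀ x : EuclideanSpace ℝ (Fin n), ⟪A x, x⟫ ≤ -γ₁ * ‖x‖ ^ 2)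
    -- (H2)
    (hγ₂ : 0 < γ₂) (hγ₃ : 0 < γ₃)
    (hB₁ : ∀ t : ℝ, t ≤ 0 → ‖NormedSpace.exp (t • B)‖ ≤ Real.exp (-γ₂ * t))
    (hB₂ : ∀ t : ℝ, 0 < t → ‖NormedSpace.exp (t • B)‖ ≤ Real.exp (-γ₃ * t))
    -- (H5)
    (hU : Measurable U) (hV : Measurable V)
    (hMU : ∀ z, ‖U z‖ ≤ MU) (hMV : ∀ z, ‖V z‖ ≤ MV)
    -- scales
    (hμ : 0 < μ) (hε : 0 < ε) (hεμ : ε * γ₂ < μ) (hμγ₁ : μ < γ₁)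
    -- input paths
    (a : ℝ → EuclideanSpace ℝ (Fin n)) (b : ℝ → EuclideanSpace ℝ (Fin m))
    (ha : Measurable a) (hb : Measurable b)
    -- anchor and an element (û, v̂) of C⁻_{μ/ε}(ℝⁿ × ℝᵐ)
    (v₀ : EuclideanSpace ℝ (Fin m))
    (uh : ℝ → EuclideanSpace ℝ (Fin n)) (vh : ℝ → EuclideanSpace ℝ (Fin m))
    (huc : ContinuousOn uh (Set.Iic 0)) (hvc : ContinuousOn vh (Set.Iic 0))
    (hbound : ∃ K : ℝ, ∀ t : ℝ, t ≤ 0 → Real.exp (μ / ε * t) * (‖uh t‖ + ‖vh t‖) ≤ K) :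
    (∀ t : ℝ, t ≤ 0 →
      Real.exp (μ / ε * t) *
        ‖∫ r in Set.Iic t,
            NormedSpace.exp (((t - r) / ε) • A) (ε⁻¹ • U (uh r + a r, vh r + b r))‖
        ≤ MU / γ₁) ∧
    (∀ t : ℝ, t ≤ 0 →
      Real.exp (μ / ε * t) *
        ‖NormedSpace.exp (t • B) v₀ -
            ∫ r in t..0, NormedSpace.exp ((t - r) • B) (V (uh r + a r, vh r + b r))‖
        ≤ ‖v₀‖ + MV / γ₂) ∧
    ContinuousOn (fun t : ℝ => ∫ r in Set.Iic t,
        NormedSpace.exp (((t - r) / ε) • A) (ε⁻¹ • U (uh r + a r, vh r + b r)))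
      (Set.Iic 0) ∧
    ContinuousOn (fun t : ℝ => NormedSpace.exp (t • B) v₀ -
        ∫ r in t..0, NormedSpace.exp ((t - r) • B) (V (uh r + a r, vh r + b r)))
      (Set.Iic 0) := by
  
  have hMU0 : 0 ≤ MU := le_trans (norm_nonneg _) (hMU 0)
  have hMV0 : 0 ≤ MV := le_trans (norm_nonneg _) (hMV 0)
  set w₁ : ℝ → EuclideanSpace ℝ (Fin n) := fun r => U (uh r + a r, vh r + b r) with hw₁
  set w₂ : ℝ → EuclideanSpace ℝ (Fin m) := fun r => V (uh r + a r, vh r + b r) with hw₂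
  -- Part 1
  have part1 : ∀ t : ℝ, t ≤ 0 →
      Real.exp (μ / ε * t) *
        ‖∫ r in Set.Iic t, NormedSpace.exp (((t - r) / ε) • A) (ε⁻¹ • w₁ r)‖ ≤ MU / γ₁ := by
    intro t ht
    have hgint := (expIntegrableOn_aux (γ₁ / ε) t (div_pos hγ₁ hε)).mul_const (ε⁻¹ * MU)
    have hb1 : ∀ᵐ r ∂volume.restrict (Iic t),
        ‖NormedSpace.exp (((t - r) / ε) • A) (ε⁻¹ • w₁ r)‖
          ≤ Real.exp ((γ₁ / ε) * (r - t)) * (ε⁻¹ * MU) := by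
      filter_upwards [ae_restrict_mem measurableSet_Iic] with r hr
      have hs : 0 ≤ (t - r) / ε := div_nonneg (by linarith [mem_Iic.1 hr]) hε.le
      have h1 : ‖NormedSpace.exp (((t - r) / ε) • A) (ε⁻¹ • w₁ r)‖
          ≤ ‖NormedSpace.exp (((t - r) / ε) • A)‖ * ‖ε⁻¹ • w₁ r‖ :=
        ContinuousLinearMap.le_opNorm _ _
      have h2 : ‖NormedSpace.exp (((t - r) / ε) • A)‖ ≤ Real.exp (-γ₁ * ((t - r) / ε)) :=
        exp_smul_decay A hA hs
      have h3 : ‖ε⁻¹ • w₁ r‖ ≤ ε⁻¹ * MU := by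
        rw [norm_smul, Real.norm_eq_abs, abs_of_pos (inv_pos.2 hε)]
        exact mul_le_mul_of_nonneg_left (hMU _) (inv_pos.2 hε).le
      have h4 : -γ₁ * ((t - r) / ε) = (γ₁ / ε) * (r - t) := by ring
      calc ‖NormedSpace.exp (((t - r) / ε) • A) (ε⁻¹ • w₁ r)‖
          ≤ Real.exp (-γ₁ * ((t - r) / ε)) * (ε⁻¹ * MU) :=
            h1.trans (mul_le_mul h2 h3 (norm_nonneg _) (Real.exp_pos _).le)
        _ = Real.exp ((γ₁ / ε) * (r - t)) * (ε⁻¹ * MU) := by rw [h4]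
    have hnorm := norm_integral_le_of_norm_le hgint hb1
    have hval : (∫ r in Iic t, Real.exp ((γ₁ / ε) * (r - t)) * (ε⁻¹ * MU)) = MU / γ₁ := by
      rw [integral_mul_const, expIntegral_Iic_aux _ _ (div_pos hγ₁ hε)]
      field_simp
    rw [hval] at hnorm
    have hexp1 : Real.exp (μ / ε * t) ≤ 1 := by
      rw [← Real.exp_zero]
      exact Real.exp_le_exp.2 (mul_nonpos_of_nonneg_of_nonpos (by positivity) ht)
    calc Real.exp (μ / ε * t) * ‖_‖ ≤ 1 * (MU / γ₁) :=
          mul_le_mul hexp1 hnorm (norm_nonneg _) zero_le_one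
      _ = MU / γ₁ := one_mul _
  -- Part 2
  have hrate : γ₂ < μ / ε := (lt_div_iff₀ hε).2 (by linarith [hεμ])
  have part2 : ∀ t : ℝ, t ≤ 0 →
      Real.exp (μ / ε * t) *
        ‖NormedSpace.exp (t • B) v₀ -
            ∫ r in t..0, NormedSpace.exp ((t - r) • B) (w₂ r)‖ ≤ ‖v₀‖ + MV / γ₂ := by
    intro t ht
    set p := Real.exp (μ / ε * t) with hp
    set q := Real.exp (-γ₂ * t) with hq
    have hp0 : 0 < p := Real.exp_pos _
    have hp1 : p ≤ 1 := by
      rw [hp, ← Real.exp_zero]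
      exact Real.exp_le_exp.2 (mul_nonpos_of_nonneg_of_nonpos (by positivity) ht)
    have hq1 : 1 ≤ q := by
      rw [hq, ← Real.exp_zero]
      exact Real.exp_le_exp.2 (by nlinarith)
    have hpq : p * q ≤ 1 := by
      rw [hp, hq, ← Real.exp_add, ← Real.exp_zero]
      exact Real.exp_le_exp.2 (by nlinarith)
    have hBt : ‖NormedSpace.exp (t • B) v₀‖ ≤ q * ‖v₀‖ := by
      calc ‖NormedSpace.exp (t • B) v₀‖ ≤ ‖NormedSpace.exp (t • B)‖ * ‖v₀‖ :=
            ContinuousLinearMap.le_opNorm _ _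
        _ ≤ q * ‖v₀‖ := mul_le_mul_of_nonneg_right (hB₁ t ht) (norm_nonneg _)
    have hb2 : ∀ᵐ r ∂volume.restrict (Set.uIoc t 0),
        ‖NormedSpace.exp ((t - r) • B) (w₂ r)‖ ≤ Real.exp (γ₂ * (r - t)) * MV := by
      have hI : Set.uIoc t 0 = Ioc t 0 := uIoc_of_le ht
      rw [hI]
      filter_upwards [ae_restrict_mem measurableSet_Ioc] with r hr
      have htr : t - r ≤ 0 := by linarith [hr.1]
      have h1 : ‖NormedSpace.exp ((t - r) • B)‖ ≤ Real.exp (-γ₂ * (t - r)) := hB₁ _ htr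
      have h2 : -γ₂ * (t - r) = γ₂ * (r - t) := by ring
      calc ‖NormedSpace.exp ((t - r) • B) (w₂ r)‖
          ≤ ‖NormedSpace.exp ((t - r) • B)‖ * ‖w₂ r‖ := ContinuousLinearMap.le_opNorm _ _
        _ ≤ Real.exp (-γ₂ * (t - r)) * MV :=
            mul_le_mul h1 (hMV _) (norm_nonneg _) (Real.exp_pos _).le
        _ = Real.exp (γ₂ * (r - t)) * MV := by rw [h2]
    have hgInt : IntervalIntegrable (fun r => Real.exp (γ₂ * (r - t)) * MV) volume t 0 :=
      ((Real.continuous_exp.comp (by fun_prop)).mul continuous_const).intervalIntegrable t 0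
    have hnorm2 := intervalIntegral.norm_integral_le_abs_of_norm_le hb2 hgInt
    have hval2 : (∫ r in t..0, Real.exp (γ₂ * (r - t)) * MV)
        = (γ₂⁻¹ * (Real.exp (-(γ₂ * t)) - 1)) * MV := by
      rw [intervalIntegral.integral_mul_const, expIntegral_interval_aux _ _ hγ₂]
    have hqt : Real.exp (-(γ₂ * t)) = q := by rw [hq]; ring_nf
    rw [hval2, hqt] at hnorm2
    have habs : |γ₂⁻¹ * (q - 1) * MV| = γ₂⁻¹ * (q - 1) * MV := by
      rw [abs_of_nonneg]
      have : 0 ≤ q - 1 := by linarith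
      positivity
    rw [habs] at hnorm2
    calc p * ‖NormedSpace.exp (t • B) v₀ - ∫ r in t..0, NormedSpace.exp ((t - r) • B) (w₂ r)‖
        ≤ p * (‖NormedSpace.exp (t • B) v₀‖
            + ‖∫ r in t..0, NormedSpace.exp ((t - r) • B) (w₂ r)‖) :=
          mul_le_mul_of_nonneg_left (norm_sub_le _ _) hp0.le
      _ ≤ p * (q * ‖v₀‖ + γ₂⁻¹ * (q - 1) * MV) :=
          mul_le_mul_of_nonneg_left (add_le_add hBt hnorm2) hp0.le
      _ ≤ ‖v₀‖ + MV / γ₂ := by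
          have h1 : p * q ≤ 1 := hpq
          have h2 : 0 ≤ ‖v₀‖ := norm_nonneg _
          have hdiv : MV / γ₂ = γ₂⁻¹ * MV := by ring
          rw [hdiv]
          nlinarith [mul_nonneg (sub_nonneg.2 h1) h2,
            mul_nonneg (by nlinarith : (0:ℝ) ≤ 1 - p * q + p)
              (mul_nonneg (inv_pos.2 hγ₂).le hMV0)]
  -- measurability infrastructure
  have hum : AEMeasurable uh (volume.restrict (Iic 0)) := huc.aemeasurable measurableSet_Iic
  have hvm : AEMeasurable vh (volume.restrict (Iic 0)) := hvc.aemeasurable measurableSet_Iic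
  have hw₁m : AEStronglyMeasurable (fun r => ε⁻¹ • w₁ r) (volume.restrict (Iic 0)) :=
    (AEMeasurable.aestronglyMeasurable
      (hU.comp_aemeasurable
        ((hum.add ha.aemeasurable).prodMk (hvm.add hb.aemeasurable)))).const_smul ε⁻¹
  have hw₂m : AEStronglyMeasurable w₂ (volume.restrict (Iic 0)) :=
    AEMeasurable.aestronglyMeasurable
      (hV.comp_aemeasurable ((hum.add ha.aemeasurable).prodMk (hvm.add hb.aemeasurable)))
  -- Part 3 : continuity of I₁
  set h₁ : ℝ → EuclideanSpace ℝ (Fin n) :=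
    fun r => NormedSpace.exp ((-r / ε) • A) (ε⁻¹ • w₁ r) with hh₁
  have hK₁ : Continuous fun r : ℝ => NormedSpace.exp ((-r / ε) • A) :=
    (continuous_iff_continuousAt.2 fun x => (NormedSpace.exp_analytic (𝕂 := ℝ) x).continuousAt).comp ((continuous_id.neg.div_const ε).smul continuous_const)
  have h₁m : AEStronglyMeasurable h₁ (volume.restrict (Iic 0)) := by
    have := (ContinuousLinearMap.id ℝ
        (EuclideanSpace ℝ (Fin n) →L[ℝ] EuclideanSpace ℝ (Fin n))).aestronglyMeasurable_comp₂
      hK₁.aestronglyMeasurable hw₁m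
    exact this
  have h₁int : IntegrableOn h₁ (Iic 0) := by
    refine Integrable.mono'
      ((expIntegrableOn_aux (γ₁ / ε) 0 (div_pos hγ₁ hε)).mul_const (ε⁻¹ * MU)) h₁m ?_
    filter_upwards [ae_restrict_mem measurableSet_Iic] with r hr
    have hs : 0 ≤ -r / ε := div_nonneg (by linarith [mem_Iic.1 hr]) hε.le
    have h2 : ‖NormedSpace.exp ((-r / ε) • A)‖ ≤ Real.exp (-γ₁ * (-r / ε)) :=
      exp_smul_decay A hA hs
    have h3 : ‖ε⁻¹ • w₁ r‖ ≤ ε⁻¹ * MU := by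
      rw [norm_smul, Real.norm_eq_abs, abs_of_pos (inv_pos.2 hε)]
      exact mul_le_mul_of_nonneg_left (hMU _) (inv_pos.2 hε).le
    calc ‖h₁ r‖ ≤ ‖NormedSpace.exp ((-r / ε) • A)‖ * ‖ε⁻¹ • w₁ r‖ :=
          ContinuousLinearMap.le_opNorm _ _
      _ ≤ Real.exp (-γ₁ * (-r / ε)) * (ε⁻¹ * MU) :=
          mul_le_mul h2 h3 (norm_nonneg _) (Real.exp_pos _).le
      _ = Real.exp ((γ₁ / ε) * (r - 0)) * (ε⁻¹ * MU) := by
          congr 1; congr 1; ring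
  set h₁' : ℝ → EuclideanSpace ℝ (Fin n) := (Iic (0:ℝ)).indicator h₁ with hh₁'
  have h₁'int : Integrable h₁' := (integrable_indicator_iff measurableSet_Iic).2 h₁int
  have hsplit : ∀ t r : ℝ, NormedSpace.exp (((t - r) / ε) • A) (ε⁻¹ • w₁ r)
      = NormedSpace.exp ((t / ε) • A) (h₁ r) := by
    intro t r
    have e1 : ((t - r) / ε) • A = (t / ε) • A + (-r / ε) • A := by module
    have hcomm : Commute ((t / ε) • A) ((-r / ε) • A) := by
      show _ * _ = _ * _
      ext x
      simp only [ContinuousLinearMap.mul_apply, ContinuousLinearMap.coe_smul',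
        Pi.smul_apply, _root_.map_smul, smul_smul]
      rw [mul_comm (t / ε) (-r / ε)]
    rw [e1, NormedSpace.exp_add_of_commute_of_mem_ball (𝕂 := ℝ) hcomm ((NormedSpace.expSeries_radius_eq_top ℝ (EuclideanSpace ℝ (Fin n) →L[ℝ] EuclideanSpace ℝ (Fin n))).symm ▸ edist_lt_top _ _) ((NormedSpace.expSeries_radius_eq_top ℝ (EuclideanSpace ℝ (Fin n) →L[ℝ] EuclideanSpace ℝ (Fin n))).symm ▸ edist_lt_top _ _), ContinuousLinearMap.mul_apply]
  have key1 : EqOn (fun t : ℝ => ∫ r in Iic t,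
        NormedSpace.exp (((t - r) / ε) • A) (ε⁻¹ • w₁ r))
      (fun t : ℝ => NormedSpace.exp ((t / ε) • A)
        ((∫ r in Iic (0:ℝ), h₁' r) + ∫ r in (0:ℝ)..t, h₁' r)) (Iic 0) := by
    intro t ht
    have hsub : Iic t ⊆ Iic (0:ℝ) := Iic_subset_Iic.2 ht
    have hint_t : IntegrableOn h₁ (Iic t) := h₁int.mono_set hsub
    have e2 : (∫ r in Iic t, NormedSpace.exp (((t - r) / ε) • A) (ε⁻¹ • w₁ r))
        = ∫ r in Iic t, NormedSpace.exp ((t / ε) • A) (h₁ r) := by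
      simp only [hsplit]
    have e3 : (∫ r in Iic t, NormedSpace.exp ((t / ε) • A) (h₁ r))
        = NormedSpace.exp ((t / ε) • A) (∫ r in Iic t, h₁ r) :=
      ContinuousLinearMap.integral_comp_comm _ hint_t
    have e4 : (∫ r in Iic t, h₁ r) = ∫ r in Iic t, h₁' r :=
      (setIntegral_congr_fun measurableSet_Iic fun r hr =>
        (indicator_of_mem (hsub hr) h₁).symm)
    have e5 : (∫ r in Iic t, h₁' r)
        = (∫ r in Iic (0:ℝ), h₁' r) + ∫ r in (0:ℝ)..t, h₁' r := by
      have h6 := intervalIntegral.integral_Iic_sub_Iic (a := (0:ℝ)) (b := t)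
        h₁'int.integrableOn h₁'int.integrableOn
      rw [sub_eq_iff_eq_add] at h6
      rw [h6, add_comm]
    simp only [e2, e3, e4, e5]
  have cont1 : ContinuousOn (fun t : ℝ => ∫ r in Iic t,
      NormedSpace.exp (((t - r) / ε) • A) (ε⁻¹ • w₁ r)) (Iic 0) := by
    have hc1 : Continuous fun t : ℝ => NormedSpace.exp ((t / ε) • A) :=
      (continuous_iff_continuousAt.2 fun x => (NormedSpace.exp_analytic (𝕂 := ℝ) x).continuousAt).comp ((continuous_id.div_const ε).smul continuous_const)
    have hc2 : Continuous fun t : ℝ =>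
        (∫ r in Iic (0:ℝ), h₁' r) + ∫ r in (0:ℝ)..t, h₁' r :=
      continuous_const.add (h₁'int.continuous_primitive 0)
    exact ((hc1.clm_apply hc2).continuousOn).congr key1
  -- Part 4 : continuity of I₂
  set h₂ : ℝ → EuclideanSpace ℝ (Fin m) := fun r => NormedSpace.exp ((-r) • B) (w₂ r) with hh₂
  have hK₂ : Continuous fun r : ℝ => NormedSpace.exp ((-r) • B) :=
    (continuous_iff_continuousAt.2 fun x => (NormedSpace.exp_analytic (𝕂 := ℝ) x).continuousAt).comp (continuous_id.neg.smul continuous_const)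
  have h₂m : AEStronglyMeasurable h₂ (volume.restrict (Iic 0)) := by
    have := (ContinuousLinearMap.id ℝ
        (EuclideanSpace ℝ (Fin m) →L[ℝ] EuclideanSpace ℝ (Fin m))).aestronglyMeasurable_comp₂
      hK₂.aestronglyMeasurable hw₂m
    exact this
  set h₂' : ℝ → EuclideanSpace ℝ (Fin m) := (Iic (0:ℝ)).indicator h₂ with hh₂'
  have h₂'m : AEStronglyMeasurable h₂' volume :=
    (aestronglyMeasurable_indicator_iff measurableSet_Iic).2 h₂m
  have hKb : ∀ r : ℝ, r ≤ 0 → ‖NormedSpace.exp ((-r) • B)‖ ≤ 1 := by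
    intro r hr
    rcases lt_or_eq_of_le hr with h | h
    · refine (hB₂ (-r) (by linarith)).trans ?_
      rw [← Real.exp_zero]
      exact Real.exp_le_exp.2 (by nlinarith)
    · subst h
      simpa using hB₁ 0 le_rfl
  have h₂norm : ∀ r : ℝ, ‖h₂' r‖ ≤ MV := by
    intro r
    by_cases hr : r ∈ Iic 0
    · rw [hh₂', indicator_of_mem hr]
      calc ‖h₂ r‖ ≤ ‖NormedSpace.exp ((-r) • B)‖ * ‖w₂ r‖ :=
            ContinuousLinearMap.le_opNorm _ _
        _ ≤ 1 * MV := mul_le_mul (hKb r hr) (hMV _) (norm_nonneg _) zero_le_one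
        _ = MV := one_mul _
    · rw [hh₂', indicator_of_notMem hr]
      simpa using hMV0
  have hIntInt : ∀ p q : ℝ, IntervalIntegrable h₂' volume p q := by
    intro p q
    rw [intervalIntegrable_iff]
    exact Integrable.mono' (integrableOn_const measure_Ioc_lt_top.ne) h₂'m.restrict
      (ae_of_all _ h₂norm)
  have hsplit₂ : ∀ t r : ℝ, NormedSpace.exp ((t - r) • B) (w₂ r)
      = NormedSpace.exp (t • B) (h₂ r) := by
    intro t r
    have e1 : (t - r) • B = t • B + (-r) • B := by module
    have hcomm : Commute (t • B) ((-r) • B) := by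
      show _ * _ = _ * _
      ext x
      simp only [ContinuousLinearMap.mul_apply, ContinuousLinearMap.coe_smul',
        Pi.smul_apply, _root_.map_smul, smul_smul]
      rw [mul_comm t (-r)]
    rw [e1, NormedSpace.exp_add_of_commute_of_mem_ball (𝕂 := ℝ) hcomm ((NormedSpace.expSeries_radius_eq_top ℝ (EuclideanSpace ℝ (Fin m) →L[ℝ] EuclideanSpace ℝ (Fin m))).symm ▸ edist_lt_top _ _) ((NormedSpace.expSeries_radius_eq_top ℝ (EuclideanSpace ℝ (Fin m) →L[ℝ] EuclideanSpace ℝ (Fin m))).symm ▸ edist_lt_top _ _), ContinuousLinearMap.mul_apply]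
  have key2 : EqOn (fun t : ℝ => NormedSpace.exp (t • B) v₀ -
        ∫ r in t..0, NormedSpace.exp ((t - r) • B) (w₂ r))
      (fun t : ℝ => NormedSpace.exp (t • B) (v₀ + ∫ r in (0:ℝ)..t, h₂' r)) (Iic 0) := by
    intro t ht
    have hIcc : uIcc t (0:ℝ) ⊆ Iic 0 := by
      rw [uIcc_of_le ht]
      exact fun r hr => hr.2
    have e2 : (∫ r in t..0, NormedSpace.exp ((t - r) • B) (w₂ r))
        = ∫ r in t..0, NormedSpace.exp (t • B) (h₂' r) := by
      refine intervalIntegral.integral_congr fun r hr => ?_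
      rw [hsplit₂]
      exact (congrArg _ (indicator_of_mem (hIcc hr) h₂)).symm
    have e3 : (∫ r in t..0, NormedSpace.exp (t • B) (h₂' r))
        = NormedSpace.exp (t • B) (∫ r in t..0, h₂' r) :=
      ContinuousLinearMap.intervalIntegral_comp_comm _ (hIntInt t 0)
    have e4 : (∫ r in t..0, h₂' r) = -∫ r in (0:ℝ)..t, h₂' r :=
      intervalIntegral.integral_symm 0 t
    show NormedSpace.exp (t • B) v₀ - _ = _
    rw [e2, e3, e4, ← (NormedSpace.exp (t • B)).map_sub, sub_neg_eq_add]
  have cont2 : ContinuousOn (fun t : ℝ => NormedSpace.exp (t • B) v₀ -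
      ∫ r in t..0, NormedSpace.exp ((t - r) • B) (w₂ r)) (Iic 0) := by
    have hc1 : Continuous fun t : ℝ => NormedSpace.exp (t • B) :=
      (continuous_iff_continuousAt.2 fun x => (NormedSpace.exp_analytic (𝕂 := ℝ) x).continuousAt).comp (continuous_id.smul continuous_const)
    have hc2 : Continuous fun t : ℝ => v₀ + ∫ r in (0:ℝ)..t, h₂' r :=
      continuous_const.add (intervalIntegral.continuous_primitive hIntInt 0)
    exact ((hc1.clm_apply hc2).continuousOn).congr key2
  exact ⟨part1, part2, cont1, cont2⟩
end

section
/- Assume (H1), (H2), (H3), let μ > 0 and ε > 0 satisfy εγ₂ < μ and γ₁ > μ, let a : ℝ → ℝⁿ, b : ℝ → ℝᵐ be Borel measurable, fix v̄₀ ∈ ℝᵐ, and let I = (I₁, I₂) be the map on C⁻_{μ/ε}(ℝⁿ×ℝᵐ) given by I₁(û,v̂)(t) = ∫_{−∞}^t e^{(A/ε)(t−r)} ε^{−1} U(û_r + a(r), v̂_r + b(r)) dr and I₂(û,v̂)(t) = e^{Bt}v̄₀ − ∫_t^0 e^{B(t−r)} V(û_r + a(r), v̂_r + b(r)) dr for t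 ≤ 0. Then for all ẑ¹, ẑ² ∈ C⁻_{μ/ε}(ℝⁿ×ℝᵐ) one has sup_{t≤0} e^{(μ/ε)t}|I(ẑ¹)(t) − I(ẑ²)(t)| ≤ (L/(γ₁−μ) + εL/(μ−εγ₂)) · sup_{t≤0} e^{(μ/ε)t}|ẑ¹_t − ẑ²_t|. -/
open scoped RealInnerProductSpace
open MeasureTheory

open Set Filter

lemma expc_intervalIntegrable (c A B : ℝ) :
    IntervalIntegrable (fun r => Real.exp (c * r)) volume A B :=
  (Real.continuous_exp.comp (continuous_const.mul continuous_id)).intervalIntegrable A B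

lemma integral_expc (c A B : ℝ) (hc : c ≠ 0) :
    ∫ r in A..B, Real.exp (c * r) = (Real.exp (c * B) - Real.exp (c * A)) / c := by
  rw [intervalIntegral.integral_comp_mul_left (fun x => Real.exp x) hc, integral_exp, smul_eq_mul]
  field_simp

lemma integrableOn_expc_Iic (c t : ℝ) (hc : 0 < c) :
    IntegrableOn (fun r => Real.exp (c * r)) (Iic t) := by
  refine integrableOn_Iic_of_intervalIntegral_norm_bounded (Real.exp (c * t) / c) t
    (fun y => (expc_intervalIntegrable c y t).1) tendsto_id
    (Filter.Eventually.of_forall fun y => ?_)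
  simp_rw [Real.norm_of_nonneg (Real.exp_pos _).le]
  rw [integral_expc c y t hc.ne']
  have h := (Real.exp_pos (c * y)).le
  exact div_le_div_of_nonneg_right (by linarith) hc.le

lemma integral_expc_Iic (c t : ℝ) (hc : 0 < c) :
    ∫ r in Iic t, Real.exp (c * r) = Real.exp (c * t) / c := by
  refine tendsto_nhds_unique
    (intervalIntegral_tendsto_integral_Iic _ (integrableOn_expc_Iic c t hc) tendsto_id) ?_
  have h1 : Filter.Tendsto (fun y : ℝ => Real.exp (c * y)) atBot (nhds 0) :=
    Real.tendsto_exp_atBot.comp (Filter.Tendsto.const_mul_atBot hc tendsto_id)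
  have h2 : Filter.Tendsto (fun y : ℝ => (Real.exp (c * t) - Real.exp (c * y)) / c) atBot
      (nhds ((Real.exp (c * t) - 0) / c)) := (tendsto_const_nhds.sub h1).div_const c
  rw [sub_zero] at h2
  refine h2.congr fun y => ?_
  simp only [id]
  rw [integral_expc c y t hc.ne']


lemma expA_norm_apply_le {n : ℕ} (γ : ℝ)
    (A : EuclideanSpace ℝ (Fin n) →L[ℝ] EuclideanSpace ℝ (Fin n))
    (hA : ∀ x : EuclideanSpace ℝ (Fin n), ⟪A x, x⟫ ≤ -γ * ‖x‖ ^ 2)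
    (x : EuclideanSpace ℝ (Fin n)) {s : ℝ} (hs : 0 ≤ s) :
    ‖NormedSpace.exp (s • A) x‖ ≤ Real.exp (-(γ * s)) * ‖x‖ := by
  set y : ℝ → EuclideanSpace ℝ (Fin n) := fun s => NormedSpace.exp (s • A) x with hy_def
  have hy : ∀ s : ℝ, HasDerivAt y (A (y s)) s := by
    intro s
    have h1 := (hasDerivAt_exp_smul_const' (𝕂 := ℝ) A s).clm_apply (hasDerivAt_const s x)
    simpa [ContinuousLinearMap.mul_apply] using h1
  set G : ℝ → ℝ := fun s => Real.exp (2 * γ * s) * ⟪y s, y s⟫ with hG_def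
  have hG : ∀ s : ℝ, HasDerivAt G
      (2 * γ * Real.exp (2 * γ * s) * ⟪y s, y s⟫ +
        Real.exp (2 * γ * s) * (⟪y s, A (y s)⟫ + ⟪A (y s), y s⟫)) s := by
    intro s
    have h0 : HasDerivAt (fun s : ℝ => 2 * γ * s) (2 * γ) s := by
      simpa using (hasDerivAt_id s).const_mul (2 * γ)
    have h1 : HasDerivAt (fun s : ℝ => Real.exp (2 * γ * s)) (2 * γ * Real.exp (2 * γ * s)) s := by
      have := (Real.hasDerivAt_exp (2 * γ * s)).comp s h0
      simpa [Function.comp_def, mul_comm] using this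
    exact h1.mul ((hy s).inner ℝ (hy s))
  have hderiv_nonpos : ∀ s : ℝ, deriv G s ≤ 0 := by
    intro s
    rw [(hG s).deriv]
    have e1 : ⟪y s, y s⟫ = ‖y s‖ ^ 2 := real_inner_self_eq_norm_sq (y s)
    have e2 : ⟪y s, A (y s)⟫ = ⟪A (y s), y s⟫ := real_inner_comm _ _
    have e3 := hA (y s)
    have e4 := (Real.exp_pos (2 * γ * s)).le
    rw [e1, e2]
    have e5 := mul_le_mul_of_nonneg_left e3 e4
    nlinarith
  have hanti : AntitoneOn G (Set.Ici 0) :=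
    antitoneOn_of_deriv_nonpos (convex_Ici 0)
      (fun s _ => ((hG s).differentiableAt.continuousAt.continuousWithinAt))
      (fun s _ => (hG s).differentiableAt.differentiableWithinAt)
      (fun s _ => hderiv_nonpos s)
  have h0 : G s ≤ G 0 := hanti (le_refl (0:ℝ)) hs hs
  have hy0 : y 0 = x := by
    show NormedSpace.exp ((0:ℝ) • A) x = x
    rw [show ((0:ℝ) • A) = 0 from zero_smul ℝ A, NormedSpace.exp_zero]; rfl
  have hG0 : G 0 = ‖x‖ ^ 2 := by
    show Real.exp (2 * γ * 0) * ⟪y 0, y 0⟫ = ‖x‖ ^ 2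
    rw [hy0, mul_zero, Real.exp_zero, one_mul, real_inner_self_eq_norm_sq]
  have key : Real.exp (2 * γ * s) * ‖y s‖ ^ 2 ≤ ‖x‖ ^ 2 := by
    rw [hG0] at h0
    rw [← real_inner_self_eq_norm_sq (y s)]
    exact h0
  have h5 : ‖y s‖ ^ 2 ≤ (Real.exp (-(γ * s)) * ‖x‖) ^ 2 := by
    have e5 : (Real.exp (-(γ * s)) * ‖x‖) ^ 2 = Real.exp (-(2 * γ * s)) * ‖x‖ ^ 2 := by
      rw [mul_pow, sq (Real.exp (-(γ * s))), ← Real.exp_add]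
      ring_nf
    rw [e5]
    have h6 := mul_le_mul_of_nonneg_left key (Real.exp_pos (-(2 * γ * s))).le
    rw [← mul_assoc, ← Real.exp_add, neg_add_cancel, Real.exp_zero, one_mul] at h6
    exact h6
  show ‖y s‖ ≤ _
  calc ‖y s‖ = √(‖y s‖ ^ 2) := by rw [Real.sqrt_sq (norm_nonneg _)]
    _ ≤ √((Real.exp (-(γ * s)) * ‖x‖) ^ 2) := Real.sqrt_le_sqrt h5
    _ = Real.exp (-(γ * s)) * ‖x‖ := Real.sqrt_sq (by positivity)

set_option maxHeartbeats 2000000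
/-- Under (H1)–(H3), with `ε γ₂ < μ` and `γ₁ > μ`, the operator
`I = (I₁, I₂)` of the integral system (★) is Lipschitz on `C⁻_{μ/ε}(ℝⁿ × ℝᵐ)` with constant
`L/(γ₁ - μ) + ε L/(μ - ε γ₂)`:
`sup_{t ≤ 0} e^{(μ/ε) t} |I(ẑ¹)(t) - I(ẑ²)(t)| ≤ (L/(γ₁-μ) + εL/(μ-εγ₂)) · sup_{t ≤ 0} e^{(μ/ε) t} |ẑ¹_t - ẑ²_t|`
(formulated via upper bounds `K` of the weighted distance, with `|(x,y)| = |x| + |y|`). -/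
theorem star_operator_contraction (n m : ℕ)
    (γ₁ γ₂ γ₃ L μ ε : ℝ)
    (A : EuclideanSpace ℝ (Fin n) →L[ℝ] EuclideanSpace ℝ (Fin n))
    (B : EuclideanSpace ℝ (Fin m) →L[ℝ] EuclideanSpace ℝ (Fin m))
    (U : EuclideanSpace ℝ (Fin n) × EuclideanSpace ℝ (Fin m) → EuclideanSpace ℝ (Fin n))
    (V : EuclideanSpace ℝ (Fin n) × EuclideanSpace ℝ (Fin m) → EuclideanSpace ℝ (Fin m))
    -- (H1)
    (hγ₁ : 0 < γ₁)
    (hA : ∀ x : EuclideanSpace ℝ (Fin n), ⟪A x, x⟫ ≤ -γ₁ * ‖x‖ ^ 2)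
    -- (H2)
    (hγ₂ : 0 < γ₂) (hγ₃ : 0 < γ₃)
    (hB₁ : ∀ t : ℝ, t ≤ 0 → ‖NormedSpace.exp (t • B)‖ ≤ Real.exp (-γ₂ * t))
    (hB₂ : ∀ t : ℝ, 0 < t → ‖NormedSpace.exp (t • B)‖ ≤ Real.exp (-γ₃ * t))
    -- (H3)
    (hL : 0 < L)
    (hU : ∀ x₁ y₁ x₂ y₂, ‖U (x₁, y₁) - U (x₂, y₂)‖ ≤ L * (‖x₁ - x₂‖ + ‖y₁ - y₂‖))
    (hV : ∀ x₁ y₁ x₂ y₂, ‖V (x₁, y₁) - V (x₂, y₂)‖ ≤ L * (‖x₁ - x₂‖ + ‖y₁ - y₂‖))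
    -- scales
    (hμ : 0 < μ) (hε : 0 < ε) (hεμ : ε * γ₂ < μ) (hμγ₁ : μ < γ₁)
    -- input paths
    (a : ℝ → EuclideanSpace ℝ (Fin n)) (b : ℝ → EuclideanSpace ℝ (Fin m))
    (ha : Measurable a) (hb : Measurable b)
    -- anchor and two elements ẑ¹ = (u₁, v₁) and ẑ² = (u₂, v₂) of C⁻_{μ/ε}(ℝⁿ × ℝᵐ)
    (v₀ : EuclideanSpace ℝ (Fin m))
    (u₁ u₂ : ℝ → EuclideanSpace ℝ (Fin n)) (v₁ v₂ : ℝ → EuclideanSpace ℝ (Fin m))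
    (hc₁ : ContinuousOn u₁ (Set.Iic 0)) (hc₂ : ContinuousOn v₁ (Set.Iic 0))
    (hc₃ : ContinuousOn u₂ (Set.Iic 0)) (hc₄ : ContinuousOn v₂ (Set.Iic 0))
    (hbd₁ : ∃ K : ℝ, ∀ t : ℝ, t ≤ 0 → Real.exp (μ / ε * t) * (‖u₁ t‖ + ‖v₁ t‖) ≤ K)
    (hbd₂ : ∃ K : ℝ, ∀ t : ℝ, t ≤ 0 → Real.exp (μ / ε * t) * (‖u₂ t‖ + ‖v₂ t‖) ≤ K) :
    ∀ K : ℝ,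
      (∀ t : ℝ, t ≤ 0 → Real.exp (μ / ε * t) * (‖u₁ t - u₂ t‖ + ‖v₁ t - v₂ t‖) ≤ K) →
      ∀ t : ℝ, t ≤ 0 →
        Real.exp (μ / ε * t) *
          (‖(∫ r in Set.Iic t,
                NormedSpace.exp (((t - r) / ε) • A) (ε⁻¹ • U (u₁ r + a r, v₁ r + b r))) -
              ∫ r in Set.Iic t,
                NormedSpace.exp (((t - r) / ε) • A) (ε⁻¹ • U (u₂ r + a r, v₂ r + b r))‖ +
          ‖(NormedSpace.exp (t • B) v₀ -
                ∫ r in t..0, NormedSpace.exp ((t - r) • B) (V (u₁ r + a r, v₁ r + b r))) -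
              (NormedSpace.exp (t • B) v₀ -
                ∫ r in t..0, NormedSpace.exp ((t - r) • B) (V (u₂ r + a r, v₂ r + b r)))‖)
        ≤ (L / (γ₁ - μ) + ε * L / (μ - ε * γ₂)) * K := by
  intro K hK t ht
  have hεne : ε ≠ 0 := ne_of_gt hε
  have hγ₁μ : 0 < γ₁ - μ := sub_pos.2 hμγ₁
  have hγ₂με : γ₂ < μ / ε := (lt_div_iff₀ hε).2 (by linarith)
  have hμεγ₂ : 0 < μ / ε - γ₂ := sub_pos.2 hγ₂με
  have hK0 : 0 ≤ K := le_trans (by positivity) (hK 0 le_rfl)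
  -- continuity of U and V
  have hUcont : Continuous U := by
    have hlip : LipschitzWith (2 * L).toNNReal U := by
      apply LipschitzWith.of_dist_le_mul
      intro p q
      rw [dist_eq_norm]
      have h1 := hU p.1 p.2 q.1 q.2
      have h2 : ‖p.1 - q.1‖ ≤ dist p q := by
        rw [dist_eq_norm]; exact norm_fst_le (p - q)
      have h3 : ‖p.2 - q.2‖ ≤ dist p q := by
        rw [dist_eq_norm]; exact norm_snd_le (p - q)
      have h4 : ((2 * L).toNNReal : ℝ) = 2 * L := Real.coe_toNNReal _ (by positivity)
      rw [h4]
      calc ‖U p - U q‖ ≤ L * (‖p.1 - q.1‖ + ‖p.2 - q.2‖) := by simpa using h1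
        _ ≤ 2 * L * dist p q := by nlinarith [dist_nonneg (x := p) (y := q)]
    exact hlip.continuous
  have hVcont : Continuous V := by
    have hlip : LipschitzWith (2 * L).toNNReal V := by
      apply LipschitzWith.of_dist_le_mul
      intro p q
      rw [dist_eq_norm]
      have h1 := hV p.1 p.2 q.1 q.2
      have h2 : ‖p.1 - q.1‖ ≤ dist p q := by
        rw [dist_eq_norm]; exact norm_fst_le (p - q)
      have h3 : ‖p.2 - q.2‖ ≤ dist p q := by
        rw [dist_eq_norm]; exact norm_snd_le (p - q)
      have h4 : ((2 * L).toNNReal : ℝ) = 2 * L := Real.coe_toNNReal _ (by positivity)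
      rw [h4]
      calc ‖V p - V q‖ ≤ L * (‖p.1 - q.1‖ + ‖p.2 - q.2‖) := by simpa using h1
        _ ≤ 2 * L * dist p q := by nlinarith [dist_nonneg (x := p) (y := q)]
    exact hlip.continuous
  -- the four integrands
  set F₁ : ℝ → EuclideanSpace ℝ (Fin n) :=
    fun r => NormedSpace.exp (((t - r) / ε) • A) (ε⁻¹ • U (u₁ r + a r, v₁ r + b r)) with hF₁
  set F₂ : ℝ → EuclideanSpace ℝ (Fin n) :=
    fun r => NormedSpace.exp (((t - r) / ε) • A) (ε⁻¹ • U (u₂ r + a r, v₂ r + b r)) with hF₂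
  set G₁ : ℝ → EuclideanSpace ℝ (Fin m) :=
    fun r => NormedSpace.exp ((t - r) • B) (V (u₁ r + a r, v₁ r + b r)) with hG₁
  set G₂ : ℝ → EuclideanSpace ℝ (Fin m) :=
    fun r => NormedSpace.exp ((t - r) • B) (V (u₂ r + a r, v₂ r + b r)) with hG₂
  -- weighted distance bound
  have hdist : ∀ r : ℝ, r ≤ 0 →
      ‖u₁ r - u₂ r‖ + ‖v₁ r - v₂ r‖ ≤ Real.exp (-(μ / ε * r)) * K := by
    intro r hr
    have h8 := mul_le_mul_of_nonneg_left (hK r hr) (Real.exp_pos (-(μ / ε * r))).le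
    rw [← mul_assoc, ← Real.exp_add, neg_add_cancel, Real.exp_zero, one_mul] at h8
    exact h8
  -- measurability of the F's
  have measF : ∀ (u : ℝ → EuclideanSpace ℝ (Fin n)) (v : ℝ → EuclideanSpace ℝ (Fin m)),
      ContinuousOn u (Set.Iic 0) → ContinuousOn v (Set.Iic 0) →
      AEStronglyMeasurable
        (fun r => NormedSpace.exp (((t - r) / ε) • A) (ε⁻¹ • U (u r + a r, v r + b r)))
        (volume.restrict (Set.Iic t)) := by
    intro u v hu hv
    have hu' : AEStronglyMeasurable u (volume.restrict (Set.Iic t)) :=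
      (hu.mono (Set.Iic_subset_Iic.2 ht)).aestronglyMeasurable measurableSet_Iic
    have hv' : AEStronglyMeasurable v (volume.restrict (Set.Iic t)) :=
      (hv.mono (Set.Iic_subset_Iic.2 ht)).aestronglyMeasurable measurableSet_Iic
    have hw : AEStronglyMeasurable (fun r => ε⁻¹ • U (u r + a r, v r + b r))
        (volume.restrict (Set.Iic t)) :=
      (hUcont.comp_aestronglyMeasurable
        ((hu'.add ha.aestronglyMeasurable).prodMk (hv'.add hb.aestronglyMeasurable))).const_smul ε⁻¹
    have hE : Continuous fun r : ℝ => NormedSpace.exp (((t - r) / ε) • A) :=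
      (continuous_iff_continuousAt.2 fun x => (NormedSpace.exp_analytic (𝕂 := ℝ) x).continuousAt).comp
        (((continuous_const.sub continuous_id).div_const ε).smul continuous_const)
    exact isBoundedBilinearMap_apply.continuous.comp_aestronglyMeasurable
      ((hE.aestronglyMeasurable).prodMk hw)
  -- pointwise bound on F₁ - F₂
  have hpt1 : ∀ r : ℝ, r ≤ t → ‖F₁ r - F₂ r‖ ≤
      ε⁻¹ * L * K * Real.exp (-(γ₁ / ε) * t) * Real.exp ((γ₁ - μ) / ε * r) := by
    intro r hr
    have hs : 0 ≤ (t - r) / ε := div_nonneg (by linarith) hε.le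
    have h1 : F₁ r - F₂ r = NormedSpace.exp (((t - r) / ε) • A)
        (ε⁻¹ • (U (u₁ r + a r, v₁ r + b r) - U (u₂ r + a r, v₂ r + b r))) := by
      rw [hF₁, hF₂]
      rw [smul_sub, map_sub]
    rw [h1]
    have h2 := expA_norm_apply_le γ₁ A hA
      (ε⁻¹ • (U (u₁ r + a r, v₁ r + b r) - U (u₂ r + a r, v₂ r + b r))) hs
    have h3 : ‖ε⁻¹ • (U (u₁ r + a r, v₁ r + b r) - U (u₂ r + a r, v₂ r + b r))‖
        = ε⁻¹ * ‖U (u₁ r + a r, v₁ r + b r) - U (u₂ r + a r, v₂ r + b r)‖ := by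
      rw [norm_smul, Real.norm_eq_abs, abs_of_pos (inv_pos.2 hε)]
    have h4 := hU (u₁ r + a r) (v₁ r + b r) (u₂ r + a r) (v₂ r + b r)
    rw [add_sub_add_right_eq_sub, add_sub_add_right_eq_sub] at h4
    have h5 := hdist r (hr.trans ht)
    have h6 : ‖U (u₁ r + a r, v₁ r + b r) - U (u₂ r + a r, v₂ r + b r)‖
        ≤ L * (Real.exp (-(μ / ε * r)) * K) :=
      h4.trans (mul_le_mul_of_nonneg_left h5 hL.le)
    have e7 : Real.exp (-(γ₁ * ((t - r) / ε))) * Real.exp (-(μ / ε * r))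
        = Real.exp (-(γ₁ / ε) * t) * Real.exp ((γ₁ - μ) / ε * r) := by
      rw [← Real.exp_add, ← Real.exp_add]
      congr 1
      field_simp
      ring
    calc ‖NormedSpace.exp (((t - r) / ε) • A)
          (ε⁻¹ • (U (u₁ r + a r, v₁ r + b r) - U (u₂ r + a r, v₂ r + b r)))‖
        ≤ Real.exp (-(γ₁ * ((t - r) / ε))) *
            ‖ε⁻¹ • (U (u₁ r + a r, v₁ r + b r) - U (u₂ r + a r, v₂ r + b r))‖ := h2
      _ ≤ Real.exp (-(γ₁ * ((t - r) / ε))) * (ε⁻¹ * (L * (Real.exp (-(μ / ε * r)) * K))) := by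
          apply mul_le_mul_of_nonneg_left _ (Real.exp_pos _).le
          rw [h3]
          exact mul_le_mul_of_nonneg_left h6 (by positivity)
      _ = ε⁻¹ * L * K * Real.exp (-(γ₁ / ε) * t) * Real.exp ((γ₁ - μ) / ε * r) := by
          linear_combination (ε⁻¹ * L * K) * e7
  have hc1pos : 0 < (γ₁ - μ) / ε := div_pos hγ₁μ hε
  have hgint : IntegrableOn
      (fun r => ε⁻¹ * L * K * Real.exp (-(γ₁ / ε) * t) * Real.exp ((γ₁ - μ) / ε * r))
      (Set.Iic t) := by
    have := (integrableOn_expc_Iic ((γ₁ - μ) / ε) t hc1pos).const_mul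
      (ε⁻¹ * L * K * Real.exp (-(γ₁ / ε) * t))
    simpa [mul_comm, IntegrableOn] using this
  have hmeas₁ := measF u₁ v₁ hc₁ hc₂
  have hmeas₂ := measF u₂ v₂ hc₃ hc₄
  have hDint : IntegrableOn (fun r => F₁ r - F₂ r) (Set.Iic t) := by
    refine hgint.mono' (hmeas₁.sub hmeas₂) ?_
    rw [ae_restrict_iff' measurableSet_Iic]
    exact ae_of_all _ fun r hr => hpt1 r hr
  have claim1 : Real.exp (μ / ε * t) * ‖(∫ r in Set.Iic t, F₁ r) - ∫ r in Set.Iic t, F₂ r‖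
      ≤ L / (γ₁ - μ) * K := by
    by_cases hi : IntegrableOn F₁ (Set.Iic t) volume
    · have hi2 : IntegrableOn F₂ (Set.Iic t) volume := by
        have h9 : IntegrableOn (fun r => F₁ r - (F₁ r - F₂ r)) (Set.Iic t) volume := hi.sub hDint
        exact h9.congr_fun (fun r _ => by abel) measurableSet_Iic
      rw [← integral_sub hi hi2]
      have h10 : ‖∫ r in Set.Iic t, (F₁ r - F₂ r)‖ ≤
          ∫ r in Set.Iic t, ε⁻¹ * L * K * Real.exp (-(γ₁ / ε) * t) * Real.exp ((γ₁ - μ) / ε * r) := by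
        refine norm_integral_le_of_norm_le hgint ?_
        rw [ae_restrict_iff' measurableSet_Iic]
        exact ae_of_all _ fun r hr => hpt1 r hr
      have h11 : (∫ r in Set.Iic t, ε⁻¹ * L * K * Real.exp (-(γ₁ / ε) * t) *
            Real.exp ((γ₁ - μ) / ε * r))
          = ε⁻¹ * L * K * Real.exp (-(γ₁ / ε) * t) *
            (Real.exp ((γ₁ - μ) / ε * t) / ((γ₁ - μ) / ε)) := by
        rw [MeasureTheory.integral_const_mul, integral_expc_Iic _ t hc1pos]
      rw [h11] at h10
      calc Real.exp (μ / ε * t) * ‖∫ r in Set.Iic t, (F₁ r - F₂ r)‖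
          ≤ Real.exp (μ / ε * t) * (ε⁻¹ * L * K * Real.exp (-(γ₁ / ε) * t) *
            (Real.exp ((γ₁ - μ) / ε * t) / ((γ₁ - μ) / ε))) :=
            mul_le_mul_of_nonneg_left h10 (Real.exp_pos _).le
        _ = L / (γ₁ - μ) * K := by
            have e123 : Real.exp (μ / ε * t) *
                (Real.exp (-(γ₁ / ε) * t) * Real.exp ((γ₁ - μ) / ε * t)) = 1 := by
              rw [← Real.exp_add, ← Real.exp_add, ← Real.exp_zero]
              congr 1
              field_simp
              ring
            have hstep : Real.exp (μ / ε * t) * (ε⁻¹ * L * K * Real.exp (-(γ₁ / ε) * t) *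
                (Real.exp ((γ₁ - μ) / ε * t) / ((γ₁ - μ) / ε)))
                = (Real.exp (μ / ε * t) *
                  (Real.exp (-(γ₁ / ε) * t) * Real.exp ((γ₁ - μ) / ε * t))) *
                  (ε⁻¹ * L * K / ((γ₁ - μ) / ε)) := by ring
            rw [hstep, e123, one_mul]
            field_simp
            try ring
    · have hi2 : ¬ IntegrableOn F₂ (Set.Iic t) volume := by
        intro h2
        apply hi
        have h9 : IntegrableOn (fun r => F₂ r + (F₁ r - F₂ r)) (Set.Iic t) volume := h2.add hDint
        exact h9.congr_fun (fun r _ => by simp) measurableSet_Iic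
      rw [integral_undef hi, integral_undef hi2, sub_zero, norm_zero, mul_zero]
      exact mul_nonneg (div_nonneg hL.le hγ₁μ.le) hK0
  -- measurability of the G's
  have measG : ∀ (u : ℝ → EuclideanSpace ℝ (Fin n)) (v : ℝ → EuclideanSpace ℝ (Fin m)),
      ContinuousOn u (Set.Iic 0) → ContinuousOn v (Set.Iic 0) →
      AEStronglyMeasurable
        (fun r => NormedSpace.exp ((t - r) • B) (V (u r + a r, v r + b r)))
        (volume.restrict (Set.Ioc t 0)) := by
    intro u v hu hv
    have hsub : Set.Ioc t 0 ⊆ Set.Iic 0 := fun x hx => hx.2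
    have hu' : AEStronglyMeasurable u (volume.restrict (Set.Ioc t 0)) :=
      (hu.mono hsub).aestronglyMeasurable measurableSet_Ioc
    have hv' : AEStronglyMeasurable v (volume.restrict (Set.Ioc t 0)) :=
      (hv.mono hsub).aestronglyMeasurable measurableSet_Ioc
    have hw : AEStronglyMeasurable (fun r => V (u r + a r, v r + b r))
        (volume.restrict (Set.Ioc t 0)) :=
      hVcont.comp_aestronglyMeasurable
        ((hu'.add ha.aestronglyMeasurable).prodMk (hv'.add hb.aestronglyMeasurable))
    have hE : Continuous fun r : ℝ => NormedSpace.exp ((t - r) • B) :=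
      (continuous_iff_continuousAt.2 fun x => (NormedSpace.exp_analytic (𝕂 := ℝ) x).continuousAt).comp
        ((continuous_const.sub continuous_id).smul continuous_const)
    exact isBoundedBilinearMap_apply.continuous.comp_aestronglyMeasurable
      ((hE.aestronglyMeasurable).prodMk hw)
  -- pointwise bound on G₁ - G₂
  have hpt2 : ∀ r ∈ Set.Icc t 0, ‖G₁ r - G₂ r‖ ≤
      L * K * Real.exp (-γ₂ * t) * Real.exp ((γ₂ - μ / ε) * r) := by
    intro r hr
    have htr : t - r ≤ 0 := by linarith [hr.1]
    have h1 : G₁ r - G₂ r = NormedSpace.exp ((t - r) • B)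
        (V (u₁ r + a r, v₁ r + b r) - V (u₂ r + a r, v₂ r + b r)) := by
      rw [hG₁, hG₂, map_sub]
    rw [h1]
    have h2 := (NormedSpace.exp ((t - r) • B)).le_opNorm
      (V (u₁ r + a r, v₁ r + b r) - V (u₂ r + a r, v₂ r + b r))
    have h3 := hB₁ (t - r) htr
    have h4 := hV (u₁ r + a r) (v₁ r + b r) (u₂ r + a r) (v₂ r + b r)
    rw [add_sub_add_right_eq_sub, add_sub_add_right_eq_sub] at h4
    have h5 := hdist r hr.2
    have h6 : ‖V (u₁ r + a r, v₁ r + b r) - V (u₂ r + a r, v₂ r + b r)‖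
        ≤ L * (Real.exp (-(μ / ε * r)) * K) :=
      h4.trans (mul_le_mul_of_nonneg_left h5 hL.le)
    have e7 : Real.exp (-γ₂ * (t - r)) * Real.exp (-(μ / ε * r))
        = Real.exp (-γ₂ * t) * Real.exp ((γ₂ - μ / ε) * r) := by
      rw [← Real.exp_add, ← Real.exp_add]
      ring_nf
    calc ‖NormedSpace.exp ((t - r) • B)
          (V (u₁ r + a r, v₁ r + b r) - V (u₂ r + a r, v₂ r + b r))‖
        ≤ ‖NormedSpace.exp ((t - r) • B)‖ *
            ‖V (u₁ r + a r, v₁ r + b r) - V (u₂ r + a r, v₂ r + b r)‖ := h2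
      _ ≤ Real.exp (-γ₂ * (t - r)) * (L * (Real.exp (-(μ / ε * r)) * K)) :=
          mul_le_mul h3 h6 (norm_nonneg _) (Real.exp_pos _).le
      _ = L * K * Real.exp (-γ₂ * t) * Real.exp ((γ₂ - μ / ε) * r) := by
          linear_combination (L * K) * e7
  have hc2neg : γ₂ - μ / ε < 0 := by linarith
  have hbcont : Continuous fun r : ℝ =>
      L * K * Real.exp (-γ₂ * t) * Real.exp ((γ₂ - μ / ε) * r) :=
    continuous_const.mul (Real.continuous_exp.comp (continuous_const.mul continuous_id))
  have hbint : IntervalIntegrable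
      (fun r : ℝ => L * K * Real.exp (-γ₂ * t) * Real.exp ((γ₂ - μ / ε) * r)) volume t 0 :=
    hbcont.intervalIntegrable t 0
  have hDint2 : IntervalIntegrable (fun r => G₁ r - G₂ r) volume t 0 := by
    rw [intervalIntegrable_iff, Set.uIoc_of_le ht]
    refine (hbcont.integrableOn_Ioc).mono' ((measG u₁ v₁ hc₁ hc₂).sub (measG u₂ v₂ hc₃ hc₄)) ?_
    rw [ae_restrict_iff' measurableSet_Ioc]
    exact ae_of_all _ fun r hr => hpt2 r (Set.Ioc_subset_Icc_self hr)
  have claim2 : Real.exp (μ / ε * t) *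
      ‖(NormedSpace.exp (t • B) v₀ - ∫ r in t..0, G₁ r) -
        (NormedSpace.exp (t • B) v₀ - ∫ r in t..0, G₂ r)‖
      ≤ ε * L / (μ - ε * γ₂) * K := by
    rw [sub_sub_sub_cancel_left, norm_sub_rev]
    by_cases hi : IntervalIntegrable G₁ volume t 0
    · have hi2 : IntervalIntegrable G₂ volume t 0 := by
        have h9 := hi.sub hDint2
        simpa using h9
      rw [← intervalIntegral.integral_sub hi hi2]
      have h10 : ‖∫ r in t..0, (G₁ r - G₂ r)‖ ≤
          ∫ r in t..0, L * K * Real.exp (-γ₂ * t) * Real.exp ((γ₂ - μ / ε) * r) :=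
        (intervalIntegral.norm_integral_le_integral_norm ht).trans
          (intervalIntegral.integral_mono_on ht hDint2.norm hbint
            (fun r hr => hpt2 r hr))
      have h11 : (∫ r in t..0, L * K * Real.exp (-γ₂ * t) * Real.exp ((γ₂ - μ / ε) * r))
          = L * K * Real.exp (-γ₂ * t) *
            ((Real.exp ((γ₂ - μ / ε) * 0) - Real.exp ((γ₂ - μ / ε) * t)) / (γ₂ - μ / ε)) := by
        rw [intervalIntegral.integral_const_mul, integral_expc _ t 0 (ne_of_lt hc2neg)]
      rw [h11] at h10
      have h12 : (Real.exp ((γ₂ - μ / ε) * 0) - Real.exp ((γ₂ - μ / ε) * t)) / (γ₂ - μ / ε)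
          ≤ Real.exp ((γ₂ - μ / ε) * t) / (-(γ₂ - μ / ε)) := by
        rw [mul_zero, Real.exp_zero]
        have heq : (1 - Real.exp ((γ₂ - μ / ε) * t)) / (γ₂ - μ / ε)
            = (Real.exp ((γ₂ - μ / ε) * t) - 1) / (-(γ₂ - μ / ε)) := by
          rw [div_eq_div_iff (ne_of_lt hc2neg) (by linarith)]
          ring
        rw [heq]
        apply div_le_div_of_nonneg_right ?_ (by linarith)
        linarith
      calc Real.exp (μ / ε * t) * ‖∫ r in t..0, (G₁ r - G₂ r)‖
          ≤ Real.exp (μ / ε * t) * (L * K * Real.exp (-γ₂ * t) *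
              ((Real.exp ((γ₂ - μ / ε) * 0) - Real.exp ((γ₂ - μ / ε) * t)) / (γ₂ - μ / ε))) :=
            mul_le_mul_of_nonneg_left h10 (Real.exp_pos _).le
        _ ≤ Real.exp (μ / ε * t) * (L * K * Real.exp (-γ₂ * t) *
              (Real.exp ((γ₂ - μ / ε) * t) / (-(γ₂ - μ / ε)))) := by
            apply mul_le_mul_of_nonneg_left _ (Real.exp_pos _).le
            exact mul_le_mul_of_nonneg_left h12 (by positivity)
        _ = ε * L / (μ - ε * γ₂) * K := by
            have e123 : Real.exp (μ / ε * t) *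
                (Real.exp (-γ₂ * t) * Real.exp ((γ₂ - μ / ε) * t)) = 1 := by
              rw [← Real.exp_add, ← Real.exp_add, ← Real.exp_zero]
              congr 1
              field_simp
              ring
            have hstep : Real.exp (μ / ε * t) * (L * K * Real.exp (-γ₂ * t) *
                (Real.exp ((γ₂ - μ / ε) * t) / (-(γ₂ - μ / ε))))
                = (Real.exp (μ / ε * t) *
                  (Real.exp (-γ₂ * t) * Real.exp ((γ₂ - μ / ε) * t))) *
                  (L * K / (-(γ₂ - μ / ε))) := by ring
            rw [hstep, e123, one_mul]
            have hcne : -(γ₂ - μ / ε) = (μ - ε * γ₂) / ε := by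
              field_simp
              ring
            rw [hcne, div_div_eq_mul_div]
            have hne : μ - ε * γ₂ ≠ 0 := by linarith
            ring
    · have hi2 : ¬ IntervalIntegrable G₂ volume t 0 := by
        intro h2
        apply hi
        have h9 : IntervalIntegrable (fun r => G₂ r + (G₁ r - G₂ r)) volume t 0 := h2.add hDint2
        exact h9.congr (fun r _ => by simp)
      rw [intervalIntegral.integral_undef hi, intervalIntegral.integral_undef hi2,
        sub_zero, norm_zero, mul_zero]
      exact mul_nonneg (div_nonneg (by positivity) (by linarith)) hK0
  calc Real.exp (μ / ε * t) *
        (‖(∫ r in Set.Iic t, F₁ r) - ∫ r in Set.Iic t, F₂ r‖ +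
          ‖(NormedSpace.exp (t • B) v₀ - ∫ r in t..0, G₁ r) -
            (NormedSpace.exp (t • B) v₀ - ∫ r in t..0, G₂ r)‖)
      = Real.exp (μ / ε * t) * ‖(∫ r in Set.Iic t, F₁ r) - ∫ r in Set.Iic t, F₂ r‖ +
        Real.exp (μ / ε * t) *
          ‖(NormedSpace.exp (t • B) v₀ - ∫ r in t..0, G₁ r) -
            (NormedSpace.exp (t • B) v₀ - ∫ r in t..0, G₂ r)‖ := mul_add _ _ _
    _ ≤ L / (γ₁ - μ) * K + ε * L / (μ - ε * γ₂) * K := add_le_add claim1 claim2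
    _ = (L / (γ₁ - μ) + ε * L / (μ - ε * γ₂)) * K := by ring
end

section
/- Assume (H1)–(H5), γ₁ − μ > L with μ > 0, εγ₂ < μ and κ_ε := L/(γ₁−μ) + εL/(μ−εγ₂) < 1, and let a, b be Borel measurable. For v̄₀ ∈ ℝᵐ let F^ε(v̄₀) denote the value û₀ of the ℝⁿ-component at time 0 of the unique solution in C⁻_{μ/ε}(ℝⁿ×ℝᵐ) of the integral system (★) with anchor v̄₀. Then for all v̄₀¹, v̄₀² ∈ ℝᵐ: |F^ε(v̄₀¹) − F^ε(v̄₀²)| ≤ [L/((γ₁−μ)(1−κ_ε))] · |v̄₀¹ − v̄₀²|; i.e., the manifold graph map is globally Lipschitz in the anchor. -/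
open scoped RealInnerProductSpace
open MeasureTheory

open Set Filter

set_option maxHeartbeats 1000000

section Helpers

lemma exp_op_apply_norm_le {n : ℕ} {γ : ℝ}
    (A : EuclideanSpace ℝ (Fin n) →L[ℝ] EuclideanSpace ℝ (Fin n))
    (hA : ∀ x, ⟪A x, x⟫ ≤ -γ * ‖x‖ ^ 2) {s : ℝ} (hs : 0 ≤ s)
    (x : EuclideanSpace ℝ (Fin n)) :
    ‖NormedSpace.exp (s • A) x‖ ≤ Real.exp (-γ * s) * ‖x‖ := by
  set y : ℝ → EuclideanSpace ℝ (Fin n) := fun u => NormedSpace.exp (u • A) x with hy_def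
  have hy : ∀ u, HasDerivAt y (A (y u)) u := by
    intro u
    have h := (hasDerivAt_exp_smul_const' (𝕂 := ℝ) A u).clm_apply (hasDerivAt_const u x)
    simpa [ContinuousLinearMap.mul_apply] using h
  set g : ℝ → ℝ := fun u => Real.exp (2 * γ * u) * ⟪y u, y u⟫ with hg_def
  have hg : ∀ u, HasDerivAt g
      (Real.exp (2 * γ * u) * (2 * γ) * ⟪y u, y u⟫ +
        Real.exp (2 * γ * u) * (⟪y u, A (y u)⟫ + ⟪A (y u), y u⟫)) u := by
    intro u
    have he : HasDerivAt (fun u : ℝ => Real.exp (2 * γ * u)) (Real.exp (2 * γ * u) * (2 * γ)) u := by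
      simpa [mul_comm] using ((hasDerivAt_id u).const_mul (2 * γ)).exp
    exact he.mul ((hy u).inner ℝ (hy u))
  have hmono : Antitone g := by
    apply antitone_of_hasDerivAt_nonpos hg
    rw [Pi.le_def]
    intro u
    have h1 : ⟪y u, y u⟫ = ‖y u‖ ^ 2 := real_inner_self_eq_norm_sq (y u)
    have h2 : ⟪y u, A (y u)⟫ = ⟪A (y u), y u⟫ := real_inner_comm _ _
    have h3 := hA (y u)
    have hep := (Real.exp_pos (2 * γ * u)).le
    have h4 := mul_le_mul_of_nonneg_left h3 hep
    rw [h1, h2, Pi.zero_apply]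
    nlinarith
  have h0 : g s ≤ g 0 := hmono hs
  have hy0 : y 0 = x := by
    show NormedSpace.exp ((0:ℝ) • A) x = x
    rw [show (0:ℝ) • A = 0 from zero_smul ℝ A, NormedSpace.exp_zero,
      ContinuousLinearMap.one_apply]
  have hep := Real.exp_pos (2 * γ * s)
  have hsq : Real.exp (2 * γ * s) * ‖y s‖ ^ 2 ≤ ‖x‖ ^ 2 := by
    have := h0
    simp only [hg_def, hy0, real_inner_self_eq_norm_sq, mul_zero, Real.exp_zero, one_mul] at this
    exact this
  have key : ‖y s‖ ^ 2 ≤ (Real.exp (-γ * s) * ‖x‖) ^ 2 := by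
    have heq : (Real.exp (-γ * s) * ‖x‖) ^ 2 = Real.exp (-(2 * γ * s)) * ‖x‖ ^ 2 := by
      rw [mul_pow, sq (Real.exp _), ← Real.exp_add]
      congr 2
      ring
    rw [heq, Real.exp_neg, inv_mul_eq_div, le_div_iff₀ hep]
    linarith [hsq]
  calc ‖y s‖ = Real.sqrt (‖y s‖ ^ 2) := (Real.sqrt_sq (norm_nonneg _)).symm
    _ ≤ Real.sqrt ((Real.exp (-γ * s) * ‖x‖) ^ 2) := Real.sqrt_le_sqrt key
    _ = Real.exp (-γ * s) * ‖x‖ := Real.sqrt_sq (by positivity)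

lemma hasDerivAt_exp_mul_div (k : ℝ) (hk : k ≠ 0) (x : ℝ) :
    HasDerivAt (fun r => Real.exp (k * r) / k) (Real.exp (k * x)) x := by
  have h := (((hasDerivAt_id x).const_mul k).exp).div_const k
  simp only [mul_one] at h
  simp only [id, mul_div_cancel_right₀ _ hk] at h
  exact h

lemma exp_mul_intervalIntegrable (k a b : ℝ) :
    IntervalIntegrable (fun r => Real.exp (k * r)) volume a b :=
  (Real.continuous_exp.comp (continuous_const.mul continuous_id)).intervalIntegrable a b

lemma integral_exp_mul' (m a b : ℝ) (hm : m ≠ 0) :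
    ∫ x in a..b, Real.exp (m * x) = (Real.exp (m * b) - Real.exp (m * a)) / m := by
  rw [intervalIntegral.integral_eq_sub_of_hasDerivAt (fun x _ => hasDerivAt_exp_mul_div m hm x)
    (exp_mul_intervalIntegrable m a b)]
  ring

lemma integrableOn_exp_mul_Iic' {k : ℝ} (hk : 0 < k) (t : ℝ) :
    IntegrableOn (fun r => Real.exp (k * r)) (Set.Iic t) := by
  apply MeasureTheory.integrableOn_Iic_of_intervalIntegral_norm_bounded
      (Real.exp (k * t) / k) t (a := fun i : ℕ => -(i : ℝ)) (l := Filter.atTop)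
  · intro i
    exact (Real.continuous_exp.comp (continuous_const.mul continuous_id)).integrableOn_Ioc
  · exact tendsto_neg_atBot_iff.mpr tendsto_natCast_atTop_atTop
  · filter_upwards with i
    have : (∫ x in (-(i:ℝ))..t, ‖Real.exp (k * x)‖) = ∫ x in (-(i:ℝ))..t, Real.exp (k * x) := by
      congr 1
      ext x
      exact Real.norm_of_nonneg (Real.exp_pos _).le
    rw [this, integral_exp_mul' k _ _ hk.ne']
    have := (Real.exp_pos (k * (-(i:ℝ)))).le
    rw [div_le_div_iff₀ hk hk]
    nlinarith [Real.exp_pos (k * t)]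

lemma integral_exp_mul_Iic' {k : ℝ} (hk : 0 < k) (t : ℝ) :
    ∫ r in Set.Iic t, Real.exp (k * r) = Real.exp (k * t) / k := by
  have htend : Tendsto (fun r : ℝ => Real.exp (k * r) / k) atBot (nhds 0) := by
    have h1 : Tendsto (fun r : ℝ => k * r) atBot atBot :=
      Tendsto.const_mul_atBot hk tendsto_id
    have := (Real.tendsto_exp_atBot.comp h1).div_const k
    simpa using this
  have := MeasureTheory.integral_Iic_of_hasDerivAt_of_tendsto'
    (fun x _ => hasDerivAt_exp_mul_div k hk.ne' x) (integrableOn_exp_mul_Iic' hk t) htend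
  simpa using this

end Helpers

theorem graph_map_lipschitz_main (n m : ℕ)
    (γ₁ γ₂ L MU MV μ ε : ℝ)
    (A : EuclideanSpace ℝ (Fin n) →L[ℝ] EuclideanSpace ℝ (Fin n))
    (B : EuclideanSpace ℝ (Fin m) →L[ℝ] EuclideanSpace ℝ (Fin m))
    (U : EuclideanSpace ℝ (Fin n) × EuclideanSpace ℝ (Fin m) → EuclideanSpace ℝ (Fin n))
    (V : EuclideanSpace ℝ (Fin n) × EuclideanSpace ℝ (Fin m) → EuclideanSpace ℝ (Fin m))
    (hγ₁ : 0 < γ₁)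
    (hA : ∀ x : EuclideanSpace ℝ (Fin n), ⟪A x, x⟫ ≤ -γ₁ * ‖x‖ ^ 2)
    (hγ₂ : 0 < γ₂)
    (hB₁ : ∀ t : ℝ, t ≤ 0 → ‖NormedSpace.exp (t • B)‖ ≤ Real.exp (-γ₂ * t))
    (hL : 0 < L)
    (hUL : ∀ x₁ y₁ x₂ y₂, ‖U (x₁, y₁) - U (x₂, y₂)‖ ≤ L * (‖x₁ - x₂‖ + ‖y₁ - y₂‖))
    (hVL : ∀ x₁ y₁ x₂ y₂, ‖V (x₁, y₁) - V (x₂, y₂)‖ ≤ L * (‖x₁ - x₂‖ + ‖y₁ - y₂‖))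
    (hMU : ∀ z, ‖U z‖ ≤ MU) (hMV : ∀ z, ‖V z‖ ≤ MV)
    (hμ : 0 < μ) (hμL : L < γ₁ - μ) (hε : 0 < ε) (hεμ : ε * γ₂ < μ)
    (hκ : L / (γ₁ - μ) + ε * L / (μ - ε * γ₂) < 1)
    (a : ℝ → EuclideanSpace ℝ (Fin n)) (b : ℝ → EuclideanSpace ℝ (Fin m))
    (ha : Measurable a) (hb : Measurable b)
    (w₁ w₂ : EuclideanSpace ℝ (Fin m))
    (uh₁ uh₂ : ℝ → EuclideanSpace ℝ (Fin n)) (vh₁ vh₂ : ℝ → EuclideanSpace ℝ (Fin m))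
    (hc₁u : ContinuousOn uh₁ (Set.Iic 0)) (hc₁v : ContinuousOn vh₁ (Set.Iic 0))
    (K₁ : ℝ) (hK₁ : ∀ t : ℝ, t ≤ 0 → Real.exp (μ / ε * t) * (‖uh₁ t‖ + ‖vh₁ t‖) ≤ K₁)
    (hu₁ : ∀ t : ℝ, t ≤ 0 → uh₁ t = ∫ r in Set.Iic t,
      NormedSpace.exp (((t - r) / ε) • A) (ε⁻¹ • U (uh₁ r + a r, vh₁ r + b r)))
    (hv₁ : ∀ t : ℝ, t ≤ 0 → vh₁ t = NormedSpace.exp (t • B) w₁ -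
      ∫ r in t..0, NormedSpace.exp ((t - r) • B) (V (uh₁ r + a r, vh₁ r + b r)))
    (hc₂u : ContinuousOn uh₂ (Set.Iic 0)) (hc₂v : ContinuousOn vh₂ (Set.Iic 0))
    (K₂ : ℝ) (hK₂ : ∀ t : ℝ, t ≤ 0 → Real.exp (μ / ε * t) * (‖uh₂ t‖ + ‖vh₂ t‖) ≤ K₂)
    (hu₂ : ∀ t : ℝ, t ≤ 0 → uh₂ t = ∫ r in Set.Iic t,
      NormedSpace.exp (((t - r) / ε) • A) (ε⁻¹ • U (uh₂ r + a r, vh₂ r + b r)))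
    (hv₂ : ∀ t : ℝ, t ≤ 0 → vh₂ t = NormedSpace.exp (t • B) w₂ -
      ∫ r in t..0, NormedSpace.exp ((t - r) • B) (V (uh₂ r + a r, vh₂ r + b r))) :
    ‖uh₁ 0 - uh₂ 0‖ ≤
      L / ((γ₁ - μ) * (1 - (L / (γ₁ - μ) + ε * L / (μ - ε * γ₂)))) * ‖w₁ - w₂‖ := by
  have hγμ : 0 < γ₁ - μ := by linarith
  have hμε2 : 0 < μ - ε * γ₂ := by linarith
  set c : ℝ := μ / ε with hc_def
  have hcpos : 0 < c := div_pos hμ hε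
  have hcγ₂ : γ₂ < c := by
    rw [hc_def, lt_div_iff₀ hε]
    linarith [hεμ]
  set κ : ℝ := L / (γ₁ - μ) + ε * L / (μ - ε * γ₂) with hκ_def
  have hκpos : 0 < κ := by positivity
  have h1κ : 0 < 1 - κ := by linarith
  -- the candidate set and its supremum
  set D : Set ℝ :=
    {x | ∃ t : ℝ, t ≤ 0 ∧ x = Real.exp (c * t) * (‖uh₁ t - uh₂ t‖ + ‖vh₁ t - vh₂ t‖)} with hD_def
  have hne : D.Nonempty := ⟨_, 0, le_refl 0, rfl⟩
  have hbdd : BddAbove D := by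
    refine ⟨K₁ + K₂, ?_⟩
    rintro x ⟨t, ht, rfl⟩
    have h1 := hK₁ t ht
    have h2 := hK₂ t ht
    have hep := (Real.exp_pos (c * t)).le
    have hn1 : ‖uh₁ t - uh₂ t‖ ≤ ‖uh₁ t‖ + ‖uh₂ t‖ := norm_sub_le _ _
    have hn2 : ‖vh₁ t - vh₂ t‖ ≤ ‖vh₁ t‖ + ‖vh₂ t‖ := norm_sub_le _ _
    have : Real.exp (c * t) * (‖uh₁ t - uh₂ t‖ + ‖vh₁ t - vh₂ t‖) ≤
        Real.exp (c * t) * ((‖uh₁ t‖ + ‖vh₁ t‖) + (‖uh₂ t‖ + ‖vh₂ t‖)) := by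
      apply mul_le_mul_of_nonneg_left _ hep
      linarith
    have heq : Real.exp (c * t) * ((‖uh₁ t‖ + ‖vh₁ t‖) + (‖uh₂ t‖ + ‖vh₂ t‖)) =
        Real.exp (μ / ε * t) * (‖uh₁ t‖ + ‖vh₁ t‖) + Real.exp (μ / ε * t) * (‖uh₂ t‖ + ‖vh₂ t‖) := by
      rw [hc_def]; ring
    linarith [this, heq ▸ this]
  set S : ℝ := sSup D with hS_def
  have hmem : ∀ t : ℝ, t ≤ 0 →
      Real.exp (c * t) * (‖uh₁ t - uh₂ t‖ + ‖vh₁ t - vh₂ t‖) ≤ S :=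
    fun t ht => le_csSup hbdd ⟨t, ht, rfl⟩
  have hS0 : 0 ≤ S := le_trans (by positivity) (hmem 0 le_rfl)
  have hDle : ∀ r : ℝ, r ≤ 0 →
      ‖uh₁ r - uh₂ r‖ + ‖vh₁ r - vh₂ r‖ ≤ S * Real.exp (-(c * r)) := by
    intro r hr
    have h := hmem r hr
    have hep := Real.exp_pos (c * r)
    rw [Real.exp_neg, mul_comm S, inv_mul_eq_div, le_div_iff₀ hep]
    linarith [h]
  -- continuity of U and V
  have hUcont : Continuous U := by
    apply (LipschitzWith.of_dist_le_mul (K := Real.toNNReal (2 * L)) ?_).continuous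
    intro p q
    rw [Real.coe_toNNReal _ (by positivity), dist_eq_norm]
    have h := hUL p.1 p.2 q.1 q.2
    have h1 : ‖p.1 - q.1‖ ≤ dist p q := by
      rw [dist_eq_norm]; simpa using norm_fst_le (p - q)
    have h2 : ‖p.2 - q.2‖ ≤ dist p q := by
      rw [dist_eq_norm]; simpa using norm_snd_le (p - q)
    calc ‖U p - U q‖ = ‖U (p.1, p.2) - U (q.1, q.2)‖ := by rw [Prod.mk.eta, Prod.mk.eta]
      _ ≤ L * (‖p.1 - q.1‖ + ‖p.2 - q.2‖) := h
      _ ≤ 2 * L * dist p q := by nlinarith [dist_nonneg (x := p) (y := q)]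
  have hVcont : Continuous V := by
    apply (LipschitzWith.of_dist_le_mul (K := Real.toNNReal (2 * L)) ?_).continuous
    intro p q
    rw [Real.coe_toNNReal _ (by positivity), dist_eq_norm]
    have h := hVL p.1 p.2 q.1 q.2
    have h1 : ‖p.1 - q.1‖ ≤ dist p q := by
      rw [dist_eq_norm]; simpa using norm_fst_le (p - q)
    have h2 : ‖p.2 - q.2‖ ≤ dist p q := by
      rw [dist_eq_norm]; simpa using norm_snd_le (p - q)
    calc ‖V p - V q‖ = ‖V (p.1, p.2) - V (q.1, q.2)‖ := by rw [Prod.mk.eta, Prod.mk.eta]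
      _ ≤ L * (‖p.1 - q.1‖ + ‖p.2 - q.2‖) := h
      _ ≤ 2 * L * dist p q := by nlinarith [dist_nonneg (x := p) (y := q)]
  -- measurability of the input pair paths on subsets of Iic 0
  have hpair : ∀ (uh : ℝ → EuclideanSpace ℝ (Fin n)) (vh : ℝ → EuclideanSpace ℝ (Fin m)),
      ContinuousOn uh (Set.Iic 0) → ContinuousOn vh (Set.Iic 0) →
      ∀ s : Set ℝ, MeasurableSet s → s ⊆ Set.Iic 0 →
      AEStronglyMeasurable (fun r => (uh r + a r, vh r + b r))
        (volume.restrict s) := by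
    intro uh vh hcu hcv s hms hsub
    have hres : volume.restrict s ≤ volume.restrict (Set.Iic (0:ℝ)) :=
      Measure.restrict_mono hsub le_rfl
    have h1 : AEStronglyMeasurable uh (volume.restrict s) :=
      (hcu.aestronglyMeasurable measurableSet_Iic).mono_measure hres
    have h2 : AEStronglyMeasurable vh (volume.restrict s) :=
      (hcv.aestronglyMeasurable measurableSet_Iic).mono_measure hres
    exact ((h1.add ha.aestronglyMeasurable).prodMk (h2.add hb.aestronglyMeasurable))
  -- u-integrand measurability
  have hmeasU : ∀ (uh : ℝ → EuclideanSpace ℝ (Fin n)) (vh : ℝ → EuclideanSpace ℝ (Fin m)),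
      ContinuousOn uh (Set.Iic 0) → ContinuousOn vh (Set.Iic 0) →
      ∀ t : ℝ, t ≤ 0 →
      AEStronglyMeasurable
        (fun r => NormedSpace.exp (((t - r) / ε) • A) (ε⁻¹ • U (uh r + a r, vh r + b r)))
        (volume.restrict (Set.Iic t)) := by
    intro uh vh hcu hcv t ht
    have hop : Continuous fun r : ℝ => NormedSpace.exp (((t - r) / ε) • A) :=
      (continuous_iff_continuousAt.2 fun u =>
        (hasDerivAt_exp_smul_const' (𝕂 := ℝ) A u).continuousAt).comp
        ((continuous_const.sub continuous_id).div_const ε)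
    have hvec : AEStronglyMeasurable (fun r => ε⁻¹ • U (uh r + a r, vh r + b r))
        (volume.restrict (Set.Iic t)) :=
      ((hUcont.comp_aestronglyMeasurable
        (hpair uh vh hcu hcv _ measurableSet_Iic (Set.Iic_subset_Iic.mpr ht))).const_smul ε⁻¹)
    exact (isBoundedBilinearMap_apply.continuous.comp_aestronglyMeasurable
      (hop.aestronglyMeasurable.prodMk hvec))
  -- v-integrand measurability on Ioc t 0
  have hmeasV : ∀ (uh : ℝ → EuclideanSpace ℝ (Fin n)) (vh : ℝ → EuclideanSpace ℝ (Fin m)),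
      ContinuousOn uh (Set.Iic 0) → ContinuousOn vh (Set.Iic 0) →
      ∀ t : ℝ,
      AEStronglyMeasurable
        (fun r => NormedSpace.exp ((t - r) • B) (V (uh r + a r, vh r + b r)))
        (volume.restrict (Set.Ioc t 0)) := by
    intro uh vh hcu hcv t
    have hop : Continuous fun r : ℝ => NormedSpace.exp ((t - r) • B) :=
      (continuous_iff_continuousAt.2 fun u =>
        (hasDerivAt_exp_smul_const' (𝕂 := ℝ) B u).continuousAt).comp
        (continuous_const.sub continuous_id)
    have hvec : AEStronglyMeasurable (fun r => V (uh r + a r, vh r + b r))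
        (volume.restrict (Set.Ioc t 0)) :=
      hVcont.comp_aestronglyMeasurable
        (hpair uh vh hcu hcv _ measurableSet_Ioc (fun x hx => hx.2))
    exact (isBoundedBilinearMap_apply.continuous.comp_aestronglyMeasurable
      (hop.aestronglyMeasurable.prodMk hvec))
  have hMU0 : 0 ≤ MU := le_trans (norm_nonneg _) (hMU (0, 0))
  have hMV0 : 0 ≤ MV := le_trans (norm_nonneg _) (hMV (0, 0))
  -- integrability of the u-integrands
  have hintU : ∀ (uh : ℝ → EuclideanSpace ℝ (Fin n)) (vh : ℝ → EuclideanSpace ℝ (Fin m)),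
      ContinuousOn uh (Set.Iic 0) → ContinuousOn vh (Set.Iic 0) →
      ∀ t : ℝ, t ≤ 0 →
      IntegrableOn
        (fun r => NormedSpace.exp (((t - r) / ε) • A) (ε⁻¹ • U (uh r + a r, vh r + b r)))
        (Set.Iic t) := by
    intro uh vh hcu hcv t ht
    refine Integrable.mono'
      (g := fun r => (ε⁻¹ * MU * Real.exp (-(γ₁ / ε) * t)) * Real.exp ((γ₁ / ε) * r))
      (((integrableOn_exp_mul_Iic' (by positivity) t).const_mul _)) (hmeasU uh vh hcu hcv t ht) ?_
    rw [ae_restrict_iff' measurableSet_Iic]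
    filter_upwards with r hr
    have hsge : (0:ℝ) ≤ (t - r) / ε := by
      apply div_nonneg _ hε.le
      simp only [Set.mem_Iic] at hr
      linarith
    have h1 := exp_op_apply_norm_le A hA hsge (ε⁻¹ • U (uh r + a r, vh r + b r))
    have h2 : ‖ε⁻¹ • U (uh r + a r, vh r + b r)‖ ≤ ε⁻¹ * MU := by
      rw [norm_smul, Real.norm_eq_abs, abs_of_pos (inv_pos.mpr hε)]
      exact mul_le_mul_of_nonneg_left (hMU _) (inv_pos.mpr hε).le
    have h3 : Real.exp (-γ₁ * ((t - r) / ε)) = Real.exp (-(γ₁ / ε) * t) * Real.exp ((γ₁ / ε) * r) := by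
      rw [← Real.exp_add]
      congr 1
      field_simp
      ring
    calc ‖NormedSpace.exp (((t - r) / ε) • A) (ε⁻¹ • U (uh r + a r, vh r + b r))‖
        ≤ Real.exp (-γ₁ * ((t - r) / ε)) * ‖ε⁻¹ • U (uh r + a r, vh r + b r)‖ := h1
      _ ≤ Real.exp (-γ₁ * ((t - r) / ε)) * (ε⁻¹ * MU) :=
          mul_le_mul_of_nonneg_left h2 (Real.exp_pos _).le
      _ = (ε⁻¹ * MU * Real.exp (-(γ₁ / ε) * t)) * Real.exp ((γ₁ / ε) * r) := by
          rw [h3]; ring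
  -- key estimate for u-component
  have hEu : ∀ t : ℝ, t ≤ 0 →
      ‖uh₁ t - uh₂ t‖ ≤ L / (γ₁ - μ) * S * Real.exp (-(c * t)) := by
    intro t ht
    have hi₁ := hintU uh₁ vh₁ hc₁u hc₁v t ht
    have hi₂ := hintU uh₂ vh₂ hc₂u hc₂v t ht
    have hdiff : uh₁ t - uh₂ t = ∫ r in Set.Iic t,
        (NormedSpace.exp (((t - r) / ε) • A) (ε⁻¹ • U (uh₁ r + a r, vh₁ r + b r)) -
         NormedSpace.exp (((t - r) / ε) • A) (ε⁻¹ • U (uh₂ r + a r, vh₂ r + b r))) := by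
      rw [hu₁ t ht, hu₂ t ht, ← integral_sub hi₁ hi₂]
    set Cψ : ℝ := ε⁻¹ * L * S * Real.exp (-(γ₁ / ε) * t) with hCψ
    have hψint : Integrable (fun r => Cψ * Real.exp (((γ₁ - μ) / ε) * r))
        (volume.restrict (Set.Iic t)) :=
      (integrableOn_exp_mul_Iic' (by positivity) t).const_mul _
    have hbound : ∀ᵐ r ∂volume.restrict (Set.Iic t),
        ‖NormedSpace.exp (((t - r) / ε) • A) (ε⁻¹ • U (uh₁ r + a r, vh₁ r + b r)) -
         NormedSpace.exp (((t - r) / ε) • A) (ε⁻¹ • U (uh₂ r + a r, vh₂ r + b r))‖ ≤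
        Cψ * Real.exp (((γ₁ - μ) / ε) * r) := by
      rw [ae_restrict_iff' measurableSet_Iic]
      filter_upwards with r hr
      simp only [Set.mem_Iic] at hr
      have hrt : r ≤ 0 := le_trans hr ht
      have hsge : (0:ℝ) ≤ (t - r) / ε := div_nonneg (by linarith) hε.le
      have heq : NormedSpace.exp (((t - r) / ε) • A) (ε⁻¹ • U (uh₁ r + a r, vh₁ r + b r)) -
          NormedSpace.exp (((t - r) / ε) • A) (ε⁻¹ • U (uh₂ r + a r, vh₂ r + b r)) =
          NormedSpace.exp (((t - r) / ε) • A)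
            (ε⁻¹ • (U (uh₁ r + a r, vh₁ r + b r) - U (uh₂ r + a r, vh₂ r + b r))) := by
        rw [smul_sub, map_sub]
      rw [heq]
      have h1 := exp_op_apply_norm_le A hA hsge
        (ε⁻¹ • (U (uh₁ r + a r, vh₁ r + b r) - U (uh₂ r + a r, vh₂ r + b r)))
      have hUd : ‖U (uh₁ r + a r, vh₁ r + b r) - U (uh₂ r + a r, vh₂ r + b r)‖ ≤
          L * (‖uh₁ r - uh₂ r‖ + ‖vh₁ r - vh₂ r‖) := by
        have := hUL (uh₁ r + a r) (vh₁ r + b r) (uh₂ r + a r) (vh₂ r + b r)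
        simpa [add_sub_add_right_eq_sub] using this
      have h2 : ‖ε⁻¹ • (U (uh₁ r + a r, vh₁ r + b r) - U (uh₂ r + a r, vh₂ r + b r))‖ ≤
          ε⁻¹ * (L * (S * Real.exp (-(c * r)))) := by
        rw [norm_smul, Real.norm_eq_abs, abs_of_pos (inv_pos.mpr hε)]
        apply mul_le_mul_of_nonneg_left _ (inv_pos.mpr hε).le
        calc ‖U (uh₁ r + a r, vh₁ r + b r) - U (uh₂ r + a r, vh₂ r + b r)‖
            ≤ L * (‖uh₁ r - uh₂ r‖ + ‖vh₁ r - vh₂ r‖) := hUd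
          _ ≤ L * (S * Real.exp (-(c * r))) :=
              mul_le_mul_of_nonneg_left (hDle r hrt) hL.le
      have h3 : Real.exp (-γ₁ * ((t - r) / ε)) * Real.exp (-(c * r)) =
          Real.exp (-(γ₁ / ε) * t) * Real.exp (((γ₁ - μ) / ε) * r) := by
        rw [← Real.exp_add, ← Real.exp_add]
        congr 1
        rw [hc_def]
        field_simp
        ring
      calc ‖NormedSpace.exp (((t - r) / ε) • A)
            (ε⁻¹ • (U (uh₁ r + a r, vh₁ r + b r) - U (uh₂ r + a r, vh₂ r + b r)))‖
          ≤ Real.exp (-γ₁ * ((t - r) / ε)) *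
            ‖ε⁻¹ • (U (uh₁ r + a r, vh₁ r + b r) - U (uh₂ r + a r, vh₂ r + b r))‖ := h1
        _ ≤ Real.exp (-γ₁ * ((t - r) / ε)) * (ε⁻¹ * (L * (S * Real.exp (-(c * r))))) :=
            mul_le_mul_of_nonneg_left h2 (Real.exp_pos _).le
        _ = ε⁻¹ * L * S * (Real.exp (-γ₁ * ((t - r) / ε)) * Real.exp (-(c * r))) := by ring
        _ = Cψ * Real.exp (((γ₁ - μ) / ε) * r) := by rw [h3, hCψ]; ring
    have hnorm := norm_integral_le_of_norm_le hψint hbound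
    rw [← hdiff] at hnorm
    have hval : ∫ r in Set.Iic t, Cψ * Real.exp (((γ₁ - μ) / ε) * r) =
        L / (γ₁ - μ) * S * Real.exp (-(c * t)) := by
      rw [integral_const_mul, integral_exp_mul_Iic' (by positivity) t, hCψ]
      have hee : Real.exp (-(γ₁ / ε) * t) * Real.exp ((γ₁ - μ) / ε * t) =
          Real.exp (-(c * t)) := by
        rw [← Real.exp_add, hc_def]
        congr 1
        field_simp
        ring
      have h1' : (γ₁ - μ) ≠ 0 := hγμ.ne'
      have h2' : ε ≠ 0 := hε.ne'
      rw [← hee]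
      field_simp
    linarith [hval ▸ hnorm]
  -- key estimate for v-component
  have hEv : ∀ t : ℝ, t ≤ 0 →
      ‖vh₁ t - vh₂ t‖ ≤ Real.exp (-(c * t)) * (‖w₁ - w₂‖ + ε * L / (μ - ε * γ₂) * S) := by
    intro t ht
    have hii : ∀ (uh : ℝ → EuclideanSpace ℝ (Fin n)) (vh : ℝ → EuclideanSpace ℝ (Fin m)),
        ContinuousOn uh (Set.Iic 0) → ContinuousOn vh (Set.Iic 0) →
        IntervalIntegrable
          (fun r => NormedSpace.exp ((t - r) • B) (V (uh r + a r, vh r + b r))) volume t 0 := by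
      intro uh vh hcu hcv
      rw [intervalIntegrable_iff_integrableOn_Ioc_of_le ht]
      refine Integrable.mono' (g := fun _ => Real.exp (-γ₂ * t) * MV)
        (integrableOn_const measure_Ioc_lt_top.ne) (hmeasV uh vh hcu hcv t) ?_
      rw [ae_restrict_iff' measurableSet_Ioc]
      filter_upwards with r hr
      have htr : t - r ≤ 0 := by linarith [hr.1]
      have hb1 := hB₁ (t - r) htr
      have hexp : Real.exp (-γ₂ * (t - r)) ≤ Real.exp (-γ₂ * t) := by
        apply Real.exp_le_exp.mpr
        nlinarith [hr.2, hγ₂]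
      calc ‖NormedSpace.exp ((t - r) • B) (V (uh r + a r, vh r + b r))‖
          ≤ ‖NormedSpace.exp ((t - r) • B)‖ * ‖V (uh r + a r, vh r + b r)‖ :=
            ContinuousLinearMap.le_opNorm _ _
        _ ≤ Real.exp (-γ₂ * (t - r)) * MV :=
            mul_le_mul hb1 (hMV _) (norm_nonneg _) (Real.exp_pos _).le
        _ ≤ Real.exp (-γ₂ * t) * MV := mul_le_mul_of_nonneg_right hexp hMV0
    have hi₁ := hii uh₁ vh₁ hc₁u hc₁v
    have hi₂ := hii uh₂ vh₂ hc₂u hc₂v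
    have hdiff : vh₁ t - vh₂ t = NormedSpace.exp (t • B) (w₁ - w₂) -
        ∫ r in t..0, (NormedSpace.exp ((t - r) • B) (V (uh₁ r + a r, vh₁ r + b r)) -
          NormedSpace.exp ((t - r) • B) (V (uh₂ r + a r, vh₂ r + b r))) := by
      rw [hv₁ t ht, hv₂ t ht, intervalIntegral.integral_sub hi₁ hi₂, map_sub]
      abel
    set m' : ℝ := γ₂ - c with hm'
    have hm'neg : m' < 0 := by rw [hm']; linarith
    set Cg : ℝ := L * S * Real.exp (-γ₂ * t) with hCg
    have hCg0 : 0 ≤ Cg := by positivity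
    have hgint : IntervalIntegrable (fun r => Cg * Real.exp (m' * r)) volume t 0 :=
      (exp_mul_intervalIntegrable m' t 0).const_mul Cg
    have hbound : ∀ᵐ r ∂volume.restrict (Set.uIoc t 0),
        ‖NormedSpace.exp ((t - r) • B) (V (uh₁ r + a r, vh₁ r + b r)) -
          NormedSpace.exp ((t - r) • B) (V (uh₂ r + a r, vh₂ r + b r))‖ ≤
        Cg * Real.exp (m' * r) := by
      rw [Set.uIoc_of_le ht, ae_restrict_iff' measurableSet_Ioc]
      filter_upwards with r hr
      have htr : t - r ≤ 0 := by linarith [hr.1]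
      have hrle : r ≤ 0 := hr.2
      have heq : NormedSpace.exp ((t - r) • B) (V (uh₁ r + a r, vh₁ r + b r)) -
          NormedSpace.exp ((t - r) • B) (V (uh₂ r + a r, vh₂ r + b r)) =
          NormedSpace.exp ((t - r) • B)
            (V (uh₁ r + a r, vh₁ r + b r) - V (uh₂ r + a r, vh₂ r + b r)) :=
        (map_sub _ _ _).symm
      rw [heq]
      have hVd : ‖V (uh₁ r + a r, vh₁ r + b r) - V (uh₂ r + a r, vh₂ r + b r)‖ ≤
          L * (S * Real.exp (-(c * r))) := by
        have h := hVL (uh₁ r + a r) (vh₁ r + b r) (uh₂ r + a r) (vh₂ r + b r)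
        simp only [add_sub_add_right_eq_sub] at h
        calc ‖V (uh₁ r + a r, vh₁ r + b r) - V (uh₂ r + a r, vh₂ r + b r)‖
            ≤ L * (‖uh₁ r - uh₂ r‖ + ‖vh₁ r - vh₂ r‖) := h
          _ ≤ L * (S * Real.exp (-(c * r))) :=
              mul_le_mul_of_nonneg_left (hDle r hrle) hL.le
      have hb1 := hB₁ (t - r) htr
      have he2 : Real.exp (-γ₂ * (t - r)) * Real.exp (-(c * r)) =
          Real.exp (-γ₂ * t) * Real.exp (m' * r) := by
        rw [← Real.exp_add, ← Real.exp_add]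
        congr 1
        rw [hm']
        ring
      calc ‖NormedSpace.exp ((t - r) • B)
            (V (uh₁ r + a r, vh₁ r + b r) - V (uh₂ r + a r, vh₂ r + b r))‖
          ≤ ‖NormedSpace.exp ((t - r) • B)‖ *
            ‖V (uh₁ r + a r, vh₁ r + b r) - V (uh₂ r + a r, vh₂ r + b r)‖ :=
            ContinuousLinearMap.le_opNorm _ _
        _ ≤ Real.exp (-γ₂ * (t - r)) * (L * (S * Real.exp (-(c * r)))) :=
            mul_le_mul hb1 hVd (norm_nonneg _) (Real.exp_pos _).le
        _ = L * S * (Real.exp (-γ₂ * (t - r)) * Real.exp (-(c * r))) := by ring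
        _ = Cg * Real.exp (m' * r) := by rw [he2, hCg]; ring
    have hIle := intervalIntegral.norm_integral_le_of_norm_le ht
      (by rw [Set.uIoc_of_le ht] at hbound; exact (ae_restrict_iff' measurableSet_Ioc).1 hbound) hgint
    have hgval : ∫ r in t..0, Cg * Real.exp (m' * r) =
        Cg * ((1 - Real.exp (m' * t)) / m') := by
      rw [intervalIntegral.integral_const_mul, integral_exp_mul' m' t 0 hm'neg.ne]
      norm_num
    have hE1 : 1 ≤ Real.exp (m' * t) := by
      rw [← Real.exp_zero]
      apply Real.exp_le_exp.mpr
      nlinarith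
    have hfracnn : 0 ≤ (1 - Real.exp (m' * t)) / m' := by
      rw [div_nonneg_iff]
      right
      constructor <;> linarith
    have hecc : Real.exp (-γ₂ * t) * Real.exp (m' * t) = Real.exp (-(c * t)) := by
      rw [← Real.exp_add]
      congr 1
      rw [hm']
      ring
    have habs : |∫ r in t..0, Cg * Real.exp (m' * r)| ≤
        ε * L / (μ - ε * γ₂) * S * Real.exp (-(c * t)) := by
      rw [hgval, abs_of_nonneg (mul_nonneg hCg0 hfracnn)]
      have hmpos : 0 < -m' := by linarith
      have hfle : (1 - Real.exp (m' * t)) / m' ≤ Real.exp (m' * t) / (-m') := by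
        have h1 : (1 - Real.exp (m' * t)) / m' = (Real.exp (m' * t) - 1) / (-m') := by
          rw [div_neg, ← neg_div, neg_sub]
        rw [h1]
        exact (div_le_div_iff_of_pos_right hmpos).mpr (by linarith)
      have hchain := mul_le_mul_of_nonneg_left hfle hCg0
      have hm'val : -m' = (μ - ε * γ₂) / ε := by
        rw [hm', hc_def]
        field_simp
        ring
      have heqf : Cg * (Real.exp (m' * t) / (-m')) =
          ε * L / (μ - ε * γ₂) * S * Real.exp (-(c * t)) := by
        rw [hCg, hm'val, ← hecc]
        have h2' : ε ≠ 0 := hε.ne'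
        have h3' : (μ - ε * γ₂) ≠ 0 := hμε2.ne'
        field_simp
      linarith [hchain, heqf ▸ hchain]
    have hterm1 : ‖NormedSpace.exp (t • B) (w₁ - w₂)‖ ≤ Real.exp (-γ₂ * t) * ‖w₁ - w₂‖ :=
      le_trans (ContinuousLinearMap.le_opNorm _ _)
        (mul_le_mul_of_nonneg_right (hB₁ t ht) (norm_nonneg _))
    have hexp2 : Real.exp (-γ₂ * t) ≤ Real.exp (-(c * t)) := by
      apply Real.exp_le_exp.mpr
      nlinarith
    calc ‖vh₁ t - vh₂ t‖
        = ‖NormedSpace.exp (t • B) (w₁ - w₂) -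
          ∫ r in t..0, (NormedSpace.exp ((t - r) • B) (V (uh₁ r + a r, vh₁ r + b r)) -
            NormedSpace.exp ((t - r) • B) (V (uh₂ r + a r, vh₂ r + b r)))‖ := by rw [← hdiff]
      _ ≤ ‖NormedSpace.exp (t • B) (w₁ - w₂)‖ +
          ‖∫ r in t..0, (NormedSpace.exp ((t - r) • B) (V (uh₁ r + a r, vh₁ r + b r)) -
            NormedSpace.exp ((t - r) • B) (V (uh₂ r + a r, vh₂ r + b r)))‖ := norm_sub_le _ _
      _ ≤ Real.exp (-γ₂ * t) * ‖w₁ - w₂‖ + ε * L / (μ - ε * γ₂) * S * Real.exp (-(c * t)) :=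
          add_le_add hterm1 (hIle.trans ((le_abs_self _).trans habs))
      _ ≤ Real.exp (-(c * t)) * (‖w₁ - w₂‖ + ε * L / (μ - ε * γ₂) * S) := by
          have := mul_le_mul_of_nonneg_right hexp2 (norm_nonneg (w₁ - w₂))
          nlinarith [Real.exp_pos (-(c * t))]
  -- combine
  have hSle : S ≤ ‖w₁ - w₂‖ + κ * S := by
    apply csSup_le hne
    rintro x ⟨t, ht, rfl⟩
    have h1 := hEu t ht
    have h2 := hEv t ht
    have hep := (Real.exp_pos (c * t)).le
    have hee : Real.exp (c * t) * Real.exp (-(c * t)) = 1 := by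
      rw [← Real.exp_add]; simp
    calc Real.exp (c * t) * (‖uh₁ t - uh₂ t‖ + ‖vh₁ t - vh₂ t‖)
        ≤ Real.exp (c * t) * ((L / (γ₁ - μ) * S * Real.exp (-(c * t))) +
          Real.exp (-(c * t)) * (‖w₁ - w₂‖ + ε * L / (μ - ε * γ₂) * S)) := by
          apply mul_le_mul_of_nonneg_left _ hep
          linarith
      _ = (Real.exp (c * t) * Real.exp (-(c * t))) *
          (L / (γ₁ - μ) * S + (‖w₁ - w₂‖ + ε * L / (μ - ε * γ₂) * S)) := by ring
      _ = ‖w₁ - w₂‖ + κ * S := by rw [hee, hκ_def]; ring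
  have hSfin : S ≤ ‖w₁ - w₂‖ / (1 - κ) := by
    rw [le_div_iff₀ h1κ]
    nlinarith [hSle]
  have hfin := hEu 0 le_rfl
  simp only [mul_zero, neg_zero, Real.exp_zero, mul_one] at hfin
  calc ‖uh₁ 0 - uh₂ 0‖ ≤ L / (γ₁ - μ) * S := hfin
    _ ≤ L / (γ₁ - μ) * (‖w₁ - w₂‖ / (1 - κ)) := by
        apply mul_le_mul_of_nonneg_left hSfin (by positivity)
    _ = L / ((γ₁ - μ) * (1 - κ)) * ‖w₁ - w₂‖ := by
        rw [div_mul_eq_div_div, div_mul_eq_mul_div, mul_div_assoc]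
        exact (fun W k g => by ring :
          ∀ W k g : ℝ, L * (W / k / g) = L / g / k * W) ‖w₁ - w₂‖ (1 - κ) (γ₁ - μ)


/-- `(û, v̂)` solves the integral system (★) on `(-∞, 0]` with input paths `a, b` and anchor `w`,
as an element of the weighted space `C⁻_{μ/ε}(ℝⁿ × ℝᵐ)` (continuity on `(-∞,0]` together with
finiteness of the weighted sup-norm `sup_{t ≤ 0} e^{(μ/ε) t} (‖û_t‖ + ‖v̂_t‖)`). -/
def IsStarSolution (n m : ℕ) (ε μ : ℝ)
    (A : EuclideanSpace ℝ (Fin n) →L[ℝ] EuclideanSpace ℝ (Fin n))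
    (B : EuclideanSpace ℝ (Fin m) →L[ℝ] EuclideanSpace ℝ (Fin m))
    (U : EuclideanSpace ℝ (Fin n) × EuclideanSpace ℝ (Fin m) → EuclideanSpace ℝ (Fin n))
    (V : EuclideanSpace ℝ (Fin n) × EuclideanSpace ℝ (Fin m) → EuclideanSpace ℝ (Fin m))
    (a : ℝ → EuclideanSpace ℝ (Fin n)) (b : ℝ → EuclideanSpace ℝ (Fin m))
    (w : EuclideanSpace ℝ (Fin m))
    (uh : ℝ → EuclideanSpace ℝ (Fin n)) (vh : ℝ → EuclideanSpace ℝ (Fin m)) : Prop :=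
  ContinuousOn uh (Set.Iic 0) ∧ ContinuousOn vh (Set.Iic 0) ∧
  (∃ K : ℝ, ∀ t : ℝ, t ≤ 0 → Real.exp (μ / ε * t) * (‖uh t‖ + ‖vh t‖) ≤ K) ∧
  (∀ t : ℝ, t ≤ 0 →
    uh t = ∫ r in Set.Iic t,
      NormedSpace.exp (((t - r) / ε) • A) (ε⁻¹ • U (uh r + a r, vh r + b r))) ∧
  (∀ t : ℝ, t ≤ 0 →
    vh t = NormedSpace.exp (t • B) w -
      ∫ r in t..0, NormedSpace.exp ((t - r) • B) (V (uh r + a r, vh r + b r)))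

/-- Under (H1)–(H5), `γ₁ - μ > L`, `ε γ₂ < μ`, `κ_ε < 1`, the graph map
`F^ε` of the invariant manifold (sending the anchor `v̄₀` to the value at time `0` of the
`ℝⁿ`-component of the unique solution of (★) with anchor `v̄₀`) is globally Lipschitz:
`‖F^ε(v̄₀¹) - F^ε(v̄₀²)‖ ≤ [L/((γ₁-μ)(1-κ_ε))] ‖v̄₀¹ - v̄₀²‖`. -/
theorem graph_map_lipschitz (n m : ℕ)
    (γ₁ γ₂ γ₃ L MU MV μ ε : ℝ)
    (A : EuclideanSpace ℝ (Fin n) →L[ℝ] EuclideanSpace ℝ (Fin n))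
    (B : EuclideanSpace ℝ (Fin m) →L[ℝ] EuclideanSpace ℝ (Fin m))
    (U : EuclideanSpace ℝ (Fin n) × EuclideanSpace ℝ (Fin m) → EuclideanSpace ℝ (Fin n))
    (V : EuclideanSpace ℝ (Fin n) × EuclideanSpace ℝ (Fin m) → EuclideanSpace ℝ (Fin m))
    -- (H1)
    (hγ₁ : 0 < γ₁)
    (hA : ∀ x : EuclideanSpace ℝ (Fin n), ⟪A x, x⟫ ≤ -γ₁ * ‖x‖ ^ 2)
    -- (H2)
    (hγ₂ : 0 < γ₂) (hγ₃ : 0 < γ₃)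
    (hB₁ : ∀ t : ℝ, t ≤ 0 → ‖NormedSpace.exp (t • B)‖ ≤ Real.exp (-γ₂ * t))
    (hB₂ : ∀ t : ℝ, 0 < t → ‖NormedSpace.exp (t • B)‖ ≤ Real.exp (-γ₃ * t))
    -- (H3)
    (hL : 0 < L)
    (hUL : ∀ x₁ y₁ x₂ y₂, ‖U (x₁, y₁) - U (x₂, y₂)‖ ≤ L * (‖x₁ - x₂‖ + ‖y₁ - y₂‖))
    (hVL : ∀ x₁ y₁ x₂ y₂, ‖V (x₁, y₁) - V (x₂, y₂)‖ ≤ L * (‖x₁ - x₂‖ + ‖y₁ - y₂‖))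
    -- (H5)
    (hMU : ∀ z, ‖U z‖ ≤ MU) (hMV : ∀ z, ‖V z‖ ≤ MV)
    -- scales: μ > 0, γ₁ - μ > L, ε γ₂ < μ, κ_ε < 1
    (hμ : 0 < μ) (hμL : L < γ₁ - μ) (hε : 0 < ε) (hεμ : ε * γ₂ < μ)
    (hκ : L / (γ₁ - μ) + ε * L / (μ - ε * γ₂) < 1)
    -- input paths
    (a : ℝ → EuclideanSpace ℝ (Fin n)) (b : ℝ → EuclideanSpace ℝ (Fin m))
    (ha : Measurable a) (hb : Measurable b)
    -- two anchors and the corresponding solutions of (★)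
    (w₁ w₂ : EuclideanSpace ℝ (Fin m))
    (uh₁ uh₂ : ℝ → EuclideanSpace ℝ (Fin n)) (vh₁ vh₂ : ℝ → EuclideanSpace ℝ (Fin m))
    (hsol₁ : IsStarSolution n m ε μ A B U V a b w₁ uh₁ vh₁)
    (hsol₂ : IsStarSolution n m ε μ A B U V a b w₂ uh₂ vh₂) :
    ‖uh₁ 0 - uh₂ 0‖ ≤
      L / ((γ₁ - μ) * (1 - (L / (γ₁ - μ) + ε * L / (μ - ε * γ₂)))) * ‖w₁ - w₂‖ := by
  obtain ⟨h1, h2, ⟨K₁, hK₁⟩, h4, h5⟩ := hsol₁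
  obtain ⟨g1, g2, ⟨K₂, hK₂⟩, g4, g5⟩ := hsol₂
  exact graph_map_lipschitz_main n m γ₁ γ₂ L MU MV μ ε A B U V hγ₁ hA hγ₂ hB₁ hL hUL hVL
    hMU hMV hμ hμL hε hεμ hκ a b ha hb w₁ w₂ uh₁ uh₂ vh₁ vh₂ h1 h2 K₁ hK₁ h4 h5
    g1 g2 K₂ hK₂ g4 g5
end

section
/- Assume (H1)–(H3) and (H5), let μ > 0 with εγ₂ < μ < γ₁, let a : ℝ → ℝⁿ, b : ℝ → ℝᵐ be Borel measurable, fix v̄₀ ∈ ℝᵐ, and let (û, v̂) ∈ C⁻_{μ/ε}(ℝⁿ×ℝᵐ) solve the integral system (★) with input paths a, b and anchor v̄₀. Then for every s ≤ 0, the shifted functions t ↦ (û_{t+s}, v̂_{t+s}), t ≤ 0, belong to C⁻_{μ/ε}(ℝⁿ×ℝᵐ) and solve the integral system (★) with the shifted input paths a(· + s), b(· + s) and anchor v̂_s. -/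
set_option maxHeartbeats 1000000
set_option synthInstance.maxHeartbeats 400000


open scoped RealInnerProductSpace
open MeasureTheory

/-- pathwise cocycle property (3.5). Under (H1)–(H3) and (H5), with
`ε γ₂ < μ < γ₁`, if `(û, v̂) ∈ C⁻_{μ/ε}` solves the integral system (★) with input paths
`a, b` and anchor `w`, then for every `s ≤ 0` the shifted functions `t ↦ (û_{t+s}, v̂_{t+s})`
belong to `C⁻_{μ/ε}` and solve (★) with the shifted input paths `a(·+s), b(·+s)` and
anchor `v̂_s`. -/
theorem star_solution_shift_invariance (n m : ℕ)
    (γ₁ γ₂ γ₃ L MU MV μ ε : ℝ)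
    (A : EuclideanSpace ℝ (Fin n) →L[ℝ] EuclideanSpace ℝ (Fin n))
    (B : EuclideanSpace ℝ (Fin m) →L[ℝ] EuclideanSpace ℝ (Fin m))
    (U : EuclideanSpace ℝ (Fin n) × EuclideanSpace ℝ (Fin m) → EuclideanSpace ℝ (Fin n))
    (V : EuclideanSpace ℝ (Fin n) × EuclideanSpace ℝ (Fin m) → EuclideanSpace ℝ (Fin m))
    -- (H1)
    (hγ₁ : 0 < γ₁)
    (hA : ∀ x : EuclideanSpace ℝ (Fin n), ⟪A x, x⟫ ≤ -γ₁ * ‖x‖ ^ 2)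
    -- (H2)
    (hγ₂ : 0 < γ₂) (hγ₃ : 0 < γ₃)
    (hB₁ : ∀ t : ℝ, t ≤ 0 → ‖NormedSpace.exp (t • B)‖ ≤ Real.exp (-γ₂ * t))
    (hB₂ : ∀ t : ℝ, 0 < t → ‖NormedSpace.exp (t • B)‖ ≤ Real.exp (-γ₃ * t))
    -- (H3)
    (hL : 0 < L)
    (hUL : ∀ x₁ y₁ x₂ y₂, ‖U (x₁, y₁) - U (x₂, y₂)‖ ≤ L * (‖x₁ - x₂‖ + ‖y₁ - y₂‖))
    (hVL : ∀ x₁ y₁ x₂ y₂, ‖V (x₁, y₁) - V (x₂, y₂)‖ ≤ L * (‖x₁ - x₂‖ + ‖y₁ - y₂‖))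
    -- (H5)
    (hMU : ∀ z, ‖U z‖ ≤ MU) (hMV : ∀ z, ‖V z‖ ≤ MV)
    -- scales: ε γ₂ < μ < γ₁
    (hμ : 0 < μ) (hε : 0 < ε) (hεμ : ε * γ₂ < μ) (hμγ₁ : μ < γ₁)
    -- input paths
    (a : ℝ → EuclideanSpace ℝ (Fin n)) (b : ℝ → EuclideanSpace ℝ (Fin m))
    (ha : Measurable a) (hb : Measurable b)
    -- anchor and a solution of (★)
    (w : EuclideanSpace ℝ (Fin m))
    (uh : ℝ → EuclideanSpace ℝ (Fin n)) (vh : ℝ → EuclideanSpace ℝ (Fin m))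
    (hsol : IsStarSolution n m ε μ A B U V a b w uh vh) :
    ∀ s : ℝ, s ≤ 0 →
      IsStarSolution n m ε μ A B U V
        (fun r => a (r + s)) (fun r => b (r + s)) (vh s)
        (fun t => uh (t + s)) (fun t => vh (t + s)) := by
  
  obtain ⟨hu_cont, hv_cont, ⟨K, hK⟩, hu_eq, hv_eq⟩ := hsol
  intro s hs
  -- continuity of V
  have hVcont : Continuous V := by
    rw [Metric.continuous_iff]
    intro p δ hδ
    refine ⟨δ / (2 * L + 1), by positivity, fun q hq => ?_⟩
    have h := hVL q.1 q.2 p.1 p.2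
    rw [dist_eq_norm]
    calc ‖V q - V p‖ = ‖V (q.1, q.2) - V (p.1, p.2)‖ := by rw [Prod.mk.eta, Prod.mk.eta]
      _ ≤ L * (‖q.1 - p.1‖ + ‖q.2 - p.2‖) := h
      _ ≤ L * (dist q p + dist q p) := by
          have h1 : ‖q.1 - p.1‖ ≤ dist q p := by
            rw [← dist_eq_norm]; exact le_trans (le_max_left _ _) (le_of_eq (Prod.dist_eq).symm)
          have h2 : ‖q.2 - p.2‖ ≤ dist q p := by
            rw [← dist_eq_norm]; exact le_trans (le_max_right _ _) (le_of_eq (Prod.dist_eq).symm)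
          nlinarith [dist_nonneg (x := q) (y := p)]
      _ = 2 * L * dist q p := by ring
      _ < δ := by
          have hd : dist q p * (2 * L + 1) < δ := (lt_div_iff₀ (by positivity)).1 hq
          have h0 : 0 ≤ dist q p := dist_nonneg
          nlinarith
  set g : ℝ → EuclideanSpace ℝ (Fin m) := fun r => V (uh r + a r, vh r + b r) with hgdef
  have hMV0 : 0 ≤ MV := le_trans (norm_nonneg _) (hMV (0, 0))
  -- measurability of g on Iic 0
  have hg_meas : AEStronglyMeasurable g (volume.restrict (Set.Iic (0:ℝ))) := by
    apply hVcont.comp_aestronglyMeasurable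
    exact AEStronglyMeasurable.prodMk
      ((hu_cont.aestronglyMeasurable measurableSet_Iic).add ha.aestronglyMeasurable)
      ((hv_cont.aestronglyMeasurable measurableSet_Iic).add hb.aestronglyMeasurable)
  -- operator norm bound for the semigroup
  have hBnorm : ∀ τ R : ℝ, |τ| ≤ R → ‖NormedSpace.exp (τ • B)‖ ≤ Real.exp (γ₂ * R) := by
    intro τ R hτ
    rcases le_or_gt τ 0 with h | h
    · refine le_trans (hB₁ τ h) (Real.exp_le_exp.2 ?_)
      have : -τ ≤ R := by rw [abs_of_nonpos h] at hτ; exact hτ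
      nlinarith
    · refine le_trans (hB₂ τ h) (Real.exp_le_exp.2 ?_)
      have hR : 0 ≤ R := le_trans (abs_nonneg τ) hτ
      nlinarith
  -- interval integrability
  have hint : ∀ c x y : ℝ, x ≤ 0 → y ≤ 0 →
      IntervalIntegrable (fun r => NormedSpace.exp ((c - r) • B) (g r)) volume x y := by
    intro c x y hx hy
    have hsub : Set.uIoc x y ⊆ Set.Iic (0:ℝ) := by
      intro r hr
      rcases hr with ⟨_, h2⟩
      exact le_trans h2 (max_le hx hy)
    set R : ℝ := |c| + |x| + |y| with hR
    have hC : ∀ r ∈ Set.uIoc x y,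
        ‖NormedSpace.exp ((c - r) • B) (g r)‖ ≤ Real.exp (γ₂ * R) * MV := by
      intro r hr
      have hrm : |r| ≤ |x| + |y| := by
        rcases hr with ⟨h1, h2⟩
        rw [abs_le]
        constructor
        · have := min_le_max (a := x) (b := y)
          have hxm : -(|x| + |y|) ≤ min x y := by
            have := neg_abs_le x; have := neg_abs_le y
            rcases le_total x y with h | h <;> simp [min_def, h] <;> nlinarith [abs_nonneg x, abs_nonneg y]
          linarith [hxm, le_of_lt h1]
        · have : max x y ≤ |x| + |y| := by
            have := le_abs_self x; have := le_abs_self y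
            rcases le_total x y with h | h <;> simp [max_def, h] <;> nlinarith [abs_nonneg x, abs_nonneg y]
          linarith
      have hτ : |c - r| ≤ R := by
        calc |c - r| ≤ |c| + |r| := abs_sub _ _
          _ ≤ R := by rw [hR]; linarith
      calc ‖NormedSpace.exp ((c - r) • B) (g r)‖
          ≤ ‖NormedSpace.exp ((c - r) • B)‖ * ‖g r‖ := ContinuousLinearMap.le_opNorm _ _
        _ ≤ Real.exp (γ₂ * R) * MV := by
            apply mul_le_mul (hBnorm _ _ hτ) (hMV _) (norm_nonneg _) (Real.exp_nonneg _)
    have hmeas : AEStronglyMeasurable (fun r => NormedSpace.exp ((c - r) • B) (g r))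
        (volume.restrict (Set.uIoc x y)) := by
      have hgm : AEStronglyMeasurable g (volume.restrict (Set.uIoc x y)) :=
        hg_meas.mono_measure (Measure.restrict_mono hsub le_rfl)
      have hFc : Continuous (fun r : ℝ => NormedSpace.exp ((c - r) • B)) := by
        letI : NormedAlgebra ℚ (EuclideanSpace ℝ (Fin m) →L[ℝ] EuclideanSpace ℝ (Fin m)) :=
          .restrictScalars ℚ ℝ _
        exact NormedSpace.exp_continuous.comp ((continuous_const.sub continuous_id).smul continuous_const)
      exact isBoundedBilinearMap_apply.continuous.comp_aestronglyMeasurable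
        (hFc.aestronglyMeasurable.prodMk hgm)
    apply IntervalIntegrable.mono_fun' (g := fun _ => Real.exp (γ₂ * R) * MV)
      intervalIntegrable_const hmeas
    rw [Filter.EventuallyLE, ae_restrict_iff' measurableSet_uIoc]
    exact Filter.Eventually.of_forall hC
  refine ⟨?_, ?_, ?_, ?_, ?_⟩
  · -- continuity of shifted uh
    exact hu_cont.comp (continuous_add_right s).continuousOn
      (fun t ht => by simp only [Set.mem_Iic] at *; linarith)
  · exact hv_cont.comp (continuous_add_right s).continuousOn
      (fun t ht => by simp only [Set.mem_Iic] at *; linarith)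
  · -- weighted bound
    refine ⟨Real.exp (-(μ / ε * s)) * K, fun t ht => ?_⟩
    have h1 := hK (t + s) (by linarith)
    have h2 : Real.exp (μ / ε * t) = Real.exp (-(μ / ε * s)) * Real.exp (μ / ε * (t + s)) := by
      rw [← Real.exp_add]; ring_nf
    rw [h2, mul_assoc]
    exact mul_le_mul_of_nonneg_left h1 (Real.exp_nonneg _)
  · -- uh equation
    intro t ht
    show uh (t + s) = ∫ r in Set.Iic t,
      NormedSpace.exp (((t - r) / ε) • A) (ε⁻¹ • U (uh (r + s) + a (r + s), vh (r + s) + b (r + s)))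
    have h1 := hu_eq (t + s) (by linarith)
    rw [h1]
    set F : ℝ → EuclideanSpace ℝ (Fin n) := fun r =>
      NormedSpace.exp (((t + s - r) / ε) • A) (ε⁻¹ • U (uh r + a r, vh r + b r)) with hFdef
    have hmap : Measure.map (fun x : ℝ => x + s) volume = volume :=
      map_add_right_eq_self volume s
    have h2 := (measurableEmbedding_addRight s).setIntegral_map
      (μ := volume) F (Set.Iic (t + s))
    rw [hmap] at h2
    rw [h2]
    have hpre : (fun x : ℝ => x + s) ⁻¹' Set.Iic (t + s) = Set.Iic t := by
      ext x
      simp only [Set.mem_preimage, Set.mem_Iic]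
      constructor <;> intro h <;> linarith
    rw [hpre]
    apply setIntegral_congr_fun measurableSet_Iic
    intro x _
    simp only [hFdef, add_sub_add_right_eq_sub]
  · -- vh equation
    intro t ht
    have e1 := hv_eq (t + s) (by linarith)
    have e2 := hv_eq s hs
    have hexp : ∀ (p q : ℝ) (x : EuclideanSpace ℝ (Fin m)),
        NormedSpace.exp (p • B) (NormedSpace.exp (q • B) x)
          = NormedSpace.exp ((p + q) • B) x := by
      intro p q x
      have hc : Commute (p • B) (q • B) := by
        apply ContinuousLinearMap.ext
        intro y
        simp only [ContinuousLinearMap.mul_apply, ContinuousLinearMap.smul_apply,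
          ContinuousLinearMap.map_smul, smul_smul]
        rw [mul_comm]
      letI : NormedAlgebra ℚ (EuclideanSpace ℝ (Fin m) →L[ℝ] EuclideanSpace ℝ (Fin m)) :=
        .restrictScalars ℚ ℝ _
      rw [show (p + q) • B = p • B + q • B from add_smul p q B,
        NormedSpace.exp_add_of_commute hc, ContinuousLinearMap.mul_apply]
    -- change of variables in the goal integral
    show vh (t + s) = NormedSpace.exp (t • B) (vh s) -
      ∫ r in t..0, NormedSpace.exp ((t - r) • B) (g (r + s))
    have e1' : vh (t + s) = NormedSpace.exp ((t + s) • B) w -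
        ∫ r in (t+s)..0, NormedSpace.exp ((t + s - r) • B) (g r) := e1
    have e2' : vh s = NormedSpace.exp (s • B) w -
        ∫ r in s..0, NormedSpace.exp ((s - r) • B) (g r) := e2
    have cv := intervalIntegral.integral_comp_add_right
      (a := t) (b := 0) (fun r => NormedSpace.exp ((t + s - r) • B) (g r)) s
    simp only [zero_add, add_sub_add_right_eq_sub] at cv
    rw [cv, e2', map_sub, hexp t s w,
      ← ContinuousLinearMap.intervalIntegral_comp_comm _ (hint s s 0 hs le_rfl)]
    simp_rw [hexp t, ← add_sub_assoc]
    rw [e1', ← intervalIntegral.integral_add_adjacent_intervals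
      (hint (t+s) (t+s) s (by linarith) hs) (hint (t+s) s 0 hs le_rfl)]
    abel
end

section
/- Let B be a real m×m matrix with ‖e^{Bt}‖ ≤ e^{−γ₃t} for all t ≥ 0, where γ₃ > 0, let ε > 0, M_V ≥ 0, v₀ ∈ ℝᵐ, and let g : [0,∞) → ℝᵐ be Borel measurable with |g(s)| ≤ M_V for all s. If ṽ : [0,∞) → ℝᵐ satisfies ṽ_t = e^{εBt} v₀ + ε ∫₀ᵗ e^{εB(t−s)} g(s) ds for all t ≥ 0, then |ṽ_t − v₀| ≤ ((|Bv₀| + M_V)/γ₃) (1 − e^{−εγ₃ t}) for all t ≥ 0. -/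
open MeasureTheory

lemma myint_exp (c d T : ℝ) (hc : c ≠ 0) :
    ∫ s in (0:ℝ)..T, Real.exp (c*s + d) = (Real.exp (c*T+d) - Real.exp d)/c := by
  have h : ∀ x ∈ Set.uIcc (0:ℝ) T,
      HasDerivAt (fun s => Real.exp (c*s+d)/c) (Real.exp (c*x+d)) x := by
    intro x _
    have h1 : HasDerivAt (fun s : ℝ => c*s+d) c x := by
      simpa using ((hasDerivAt_id x).const_mul c).add_const d
    have h2 := h1.exp.div_const c
    simpa [mul_div_assoc, mul_div_cancel_left₀, hc] using h2
  rw [intervalIntegral.integral_eq_sub_of_hasDerivAt h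
    ((Real.continuous_exp.comp (by continuity)).intervalIntegrable 0 T)]
  rw [mul_zero, zero_add]
  ring

/-- estimate (5.7) in the proof of Theorem 5.2. Let `B` be a real `m × m`
matrix with `‖e^{Bt}‖ ≤ e^{-γ₃ t}` for all `t ≥ 0` (`γ₃ > 0`), let `ε > 0`, `M_V ≥ 0`,
`v₀ ∈ ℝᵐ`, and let `g` be Borel measurable with `‖g(s)‖ ≤ M_V` for all `s ≥ 0`. If
`ṽ_t = e^{ε B t} v₀ + ε ∫₀ᵗ e^{ε B (t-s)} g(s) ds` for all `t ≥ 0`, then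
`‖ṽ_t - v₀‖ ≤ ((‖B v₀‖ + M_V)/γ₃) (1 - e^{-ε γ₃ t})` for all `t ≥ 0`. -/
theorem reduced_slow_variable_estimate (m : ℕ)
    (γ₃ ε MV : ℝ) (hγ₃ : 0 < γ₃) (hε : 0 < ε) (hMV : 0 ≤ MV)
    (B : EuclideanSpace ℝ (Fin m) →L[ℝ] EuclideanSpace ℝ (Fin m))
    (hB : ∀ t : ℝ, 0 ≤ t → ‖NormedSpace.exp (t • B)‖ ≤ Real.exp (-γ₃ * t))
    (v₀ : EuclideanSpace ℝ (Fin m))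
    (g : ℝ → EuclideanSpace ℝ (Fin m)) (hg : Measurable g)
    (hgbd : ∀ s : ℝ, 0 ≤ s → ‖g s‖ ≤ MV)
    (vt : ℝ → EuclideanSpace ℝ (Fin m))
    (hvt : ∀ t : ℝ, 0 ≤ t →
      vt t = NormedSpace.exp ((ε * t) • B) v₀ +
        ε • ∫ s in (0:ℝ)..t, NormedSpace.exp ((ε * (t - s)) • B) (g s)) :
    ∀ t : ℝ, 0 ≤ t →
      ‖vt t - v₀‖ ≤ (‖B v₀‖ + MV) / γ₃ * (1 - Real.exp (-(ε * γ₃ * t))) := by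
  intro t ht
  have hεt : (0:ℝ) ≤ ε * t := by positivity
  rw [hvt t ht]
  -- Part 1 : norm of exp((εt)•B) v₀ - v₀
  have hf : ∀ τ ∈ Set.uIcc (0:ℝ) (ε*t),
      HasDerivAt (fun u : ℝ => NormedSpace.exp (u•B) v₀)
        (NormedSpace.exp (τ•B) (B v₀)) τ := by
    intro τ _
    have h1 := hasDerivAt_exp_smul_const (𝕂 := ℝ) B τ
    have h2 := h1.clm_apply (hasDerivAt_const τ v₀)
    simpa [ContinuousLinearMap.mul_apply] using h2
  have hcont : Continuous fun τ : ℝ => NormedSpace.exp (τ•B) (B v₀) := by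
    exact ((ContinuousLinearMap.apply ℝ _ (B v₀)).continuous).comp
      (continuous_iff_continuousAt.2 fun τ => (hasDerivAt_exp_smul_const (𝕂 := ℝ) B τ).continuousAt)
  have heq : NormedSpace.exp ((ε*t)•B) v₀ - v₀
      = ∫ τ in (0:ℝ)..(ε*t), NormedSpace.exp (τ•B) (B v₀) := by
    rw [intervalIntegral.integral_eq_sub_of_hasDerivAt hf (hcont.intervalIntegrable _ _)]
    rw [zero_smul ℝ B, NormedSpace.exp_zero, ContinuousLinearMap.one_apply]
  have hint1 : ∫ τ in (0:ℝ)..(ε*t), Real.exp (-γ₃*τ + 0) * ‖B v₀‖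
      = (1 - Real.exp (-(ε*γ₃*t)))/γ₃ * ‖B v₀‖ := by
    rw [intervalIntegral.integral_mul_const, myint_exp _ _ _ (neg_ne_zero.mpr hγ₃.ne')]
    rw [show -γ₃*(ε*t) + 0 = -(ε*γ₃*t) by ring]
    rw [show (Real.exp (-(ε*γ₃*t)) - Real.exp 0)/(-γ₃) = (1 - Real.exp (-(ε*γ₃*t)))/γ₃ by
      rw [Real.exp_zero]; ring]
  have hbd1 : ‖NormedSpace.exp ((ε*t)•B) v₀ - v₀‖
      ≤ (1 - Real.exp (-(ε*γ₃*t)))/γ₃ * ‖B v₀‖ := by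
    rw [heq]
    have hae : ∀ᵐ τ ∂(volume.restrict (Set.uIoc (0:ℝ) (ε*t))),
        ‖NormedSpace.exp (τ•B) (B v₀)‖ ≤ Real.exp (-γ₃*τ + 0) * ‖B v₀‖ := by
      refine (ae_restrict_mem measurableSet_uIoc).mono fun τ hτ => ?_
      rw [Set.uIoc_of_le hεt] at hτ
      have hτ0 : (0:ℝ) ≤ τ := hτ.1.le
      calc ‖NormedSpace.exp (τ•B) (B v₀)‖ ≤ ‖NormedSpace.exp (τ•B)‖ * ‖B v₀‖ :=
            ContinuousLinearMap.le_opNorm _ _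
        _ ≤ Real.exp (-γ₃*τ + 0) * ‖B v₀‖ := by
            rw [add_zero]
            exact mul_le_mul_of_nonneg_right (hB τ hτ0) (norm_nonneg _)
    have := intervalIntegral.norm_integral_le_of_norm_le hεt
      (((ae_restrict_iff' measurableSet_uIoc).1 hae).mono fun τ h hτ => h (by rwa [Set.uIoc_of_le hεt]))
      (((Real.continuous_exp.comp ((continuous_const.mul continuous_id).add continuous_const)).mul
        continuous_const).intervalIntegrable 0 (ε*t))
    rw [hint1] at this
    refine this.trans ((le_abs_self _).trans (le_of_eq (abs_of_nonneg ?_)))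
    have hexp : Real.exp (-(ε*γ₃*t)) ≤ 1 := Real.exp_le_one_iff.mpr (by nlinarith)
    exact mul_nonneg (div_nonneg (by linarith) hγ₃.le) (norm_nonneg _)
  -- Part 2 : norm of the integral term
  have hint2 : ∫ s in (0:ℝ)..t, Real.exp ((ε*γ₃)*s + (-(ε*γ₃*t))) * MV
      = (1 - Real.exp (-(ε*γ₃*t)))/(ε*γ₃) * MV := by
    rw [intervalIntegral.integral_mul_const, myint_exp _ _ _ (by positivity : ε*γ₃ ≠ 0)]
    rw [show (ε*γ₃)*t + -(ε*γ₃*t) = 0 by ring, Real.exp_zero]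
  have hbd2 : ‖ε • ∫ s in (0:ℝ)..t, NormedSpace.exp ((ε*(t-s))•B) (g s)‖
      ≤ MV/γ₃ * (1 - Real.exp (-(ε*γ₃*t))) := by
    rw [norm_smul, Real.norm_of_nonneg hε.le]
    have hae : ∀ᵐ s ∂(volume.restrict (Set.uIoc (0:ℝ) t)),
        ‖NormedSpace.exp ((ε*(t-s))•B) (g s)‖ ≤ Real.exp ((ε*γ₃)*s + (-(ε*γ₃*t))) * MV := by
      refine (ae_restrict_mem measurableSet_uIoc).mono fun s hs => ?_
      rw [Set.uIoc_of_le ht] at hs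
      have hs0 : (0:ℝ) ≤ s := hs.1.le
      have hts : (0:ℝ) ≤ ε*(t-s) := by nlinarith [hs.2]
      calc ‖NormedSpace.exp ((ε*(t-s))•B) (g s)‖
          ≤ ‖NormedSpace.exp ((ε*(t-s))•B)‖ * ‖g s‖ := ContinuousLinearMap.le_opNorm _ _
        _ ≤ Real.exp ((ε*γ₃)*s + (-(ε*γ₃*t))) * MV := by
            refine mul_le_mul (le_of_le_of_eq (hB _ hts) (by ring_nf)) (hgbd s hs0)
              (norm_nonneg _) (Real.exp_pos _).le
    have := intervalIntegral.norm_integral_le_of_norm_le ht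
      (((ae_restrict_iff' measurableSet_uIoc).1 hae).mono fun s h hs => h (by rwa [Set.uIoc_of_le ht]))
      (((Real.continuous_exp.comp ((continuous_const.mul continuous_id).add continuous_const)).mul
        continuous_const).intervalIntegrable 0 t)
    rw [hint2] at this
    have hexp : Real.exp (-(ε*γ₃*t)) ≤ 1 := Real.exp_le_one_iff.mpr (by nlinarith)
    have habs : |(1 - Real.exp (-(ε*γ₃*t)))/(ε*γ₃) * MV| = (1 - Real.exp (-(ε*γ₃*t)))/(ε*γ₃) * MV := by
      apply abs_of_nonneg
      exact mul_nonneg (div_nonneg (by linarith) (by positivity)) hMV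
    calc ε * ‖∫ s in (0:ℝ)..t, NormedSpace.exp ((ε*(t-s))•B) (g s)‖
        ≤ ε * ((1 - Real.exp (-(ε*γ₃*t)))/(ε*γ₃) * MV) :=
          mul_le_mul_of_nonneg_left this hε.le
      _ = MV/γ₃ * (1 - Real.exp (-(ε*γ₃*t))) := by field_simp
  calc ‖NormedSpace.exp ((ε*t)•B) v₀ +
        (ε • ∫ s in (0:ℝ)..t, NormedSpace.exp ((ε*(t-s))•B) (g s)) - v₀‖
      = ‖(NormedSpace.exp ((ε*t)•B) v₀ - v₀) +
        ε • ∫ s in (0:ℝ)..t, NormedSpace.exp ((ε*(t-s))•B) (g s)‖ := by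
        rw [add_sub_right_comm]
    _ ≤ ‖NormedSpace.exp ((ε*t)•B) v₀ - v₀‖ +
        ‖ε • ∫ s in (0:ℝ)..t, NormedSpace.exp ((ε*(t-s))•B) (g s)‖ := norm_add_le _ _
    _ ≤ (1 - Real.exp (-(ε*γ₃*t)))/γ₃ * ‖B v₀‖ + MV/γ₃ * (1 - Real.exp (-(ε*γ₃*t))) :=
        add_le_add hbd1 hbd2
    _ = (‖B v₀‖ + MV) / γ₃ * (1 - Real.exp (-(ε * γ₃ * t))) := by ring
end
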